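/- arXiv:1008.5329 — 6 statements merged into one kernel-verified Lean document; each statement's English description precedes it below -/
import Mathlib

section
/- Let $n \geq 3$ and let $U = (u_{ij})$ be a symmetric $n \times n$ matrix over a field with $u_{ii} = 0$ for all $i$, whose entries satisfy the Ptolemy/Plücker exchange relations: for all $i < j < k < l$ (indices in cyclic order), $u_{ij}u_{kl} + u_{jk}u_{li} = u_{ik}u_{jl}$, and suppose all off-diagonal entries are nonzero. Then $\det(U) = -(-2)^{n-2} \, u_{12}u_{23}\cdots u_{n-1,n}u_{n,1}$. -/
section FriezeHelpers

variable {F : Type*} [Field F]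

private lemma prod_rot' {j : ℕ} (V : Matrix (Fin (j+1)) (Fin (j+1)) F) :
    ∏ i : Fin (j+1), V i (finRotate (j+1) i)
      = (∏ i : Fin j, V i.castSucc i.succ) * V (Fin.last j) 0 := by
  rw [Fin.prod_univ_castSucc, finRotate_last]
  congr 1
  refine Finset.prod_congr rfl fun i _ => ?_
  rw [finRotate_succ_apply, Fin.coeSucc_eq_succ]

private lemma consec_split' {j : ℕ} (V : Matrix (Fin (j+2)) (Fin (j+2)) F) :
    (∏ i : Fin (j+1), V i.castSucc i.succ)
      = (∏ i : Fin j, V i.castSucc.castSucc i.succ.castSucc)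
        * V (Fin.last j).castSucc (Fin.last (j+1)) := by
  rw [Fin.prod_univ_castSucc, Fin.succ_last]
  simp only [Fin.succ_castSucc]

private lemma frieze_step (k : ℕ) (U : Matrix (Fin (k+4)) (Fin (k+4)) F)
    (hsym : U.IsSymm)
    (hdiag : ∀ i, U i i = 0)
    (hnz : ∀ i j : Fin (k+4), i ≠ j → U i j ≠ 0)
    (hex : ∀ i j k' l : Fin (k+4), i < j → j < k' → k' < l →
      U i j * U k' l + U j k' * U l i = U i k' * U j l)
    (IH0 : ∀ V : Matrix (Fin (k+3)) (Fin (k+3)) F, V.IsSymm → (∀ i, V i i = 0) →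
      (∀ i j, i ≠ j → V i j ≠ 0) →
      (∀ i j k' l : Fin (k+3), i < j → j < k' → k' < l →
        V i j * V k' l + V j k' * V l i = V i k' * V j l) →
      V.det = -(-2:F)^(k+1) * ∏ i : Fin (k+3), V i (finRotate (k+3) i))
    (IH1 : ∀ V : Matrix (Fin (k+2)) (Fin (k+2)) F, V.IsSymm → (∀ i, V i i = 0) →
      (∀ i j, i ≠ j → V i j ≠ 0) →
      (∀ i j k' l : Fin (k+2), i < j → j < k' → k' < l →
        V i j * V k' l + V j k' * V l i = V i k' * V j l) →
      V.det = -(-2:F)^k * ∏ i : Fin (k+2), V i (finRotate (k+2) i)) :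
    U.det = -(-2:F)^(k+2) * ∏ i : Fin (k+4), U i (finRotate (k+4) i) := by
  have S : ∀ i j, U j i = U i j := hsym.apply
  set a : Fin (k+4) := ⟨k+1, by omega⟩ with ha
  set b : Fin (k+4) := ⟨k+2, by omega⟩ with hb
  set c : Fin (k+4) := Fin.last (k+3) with hc
  have hab : a < b := by simp [ha, hb, Fin.lt_def]
  have hbc : b < c := by simp [hb, hc, Fin.lt_def]
  have hac : a < c := hab.trans hbc
  have h0a : (0 : Fin (k+4)) < a := by simp [ha, Fin.lt_def]
  have h0b : (0 : Fin (k+4)) < b := h0a.trans hab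
  have hUab : U a b ≠ 0 := hnz a b hab.ne
  set q : F := U a c / U a b with hq'
  set r : F := U b c / U a b with hr'
  have hq : q * U a b = U a c := div_mul_cancel₀ _ hUab
  have hr : r * U a b = U b c := div_mul_cancel₀ _ hUab
  -- the row combination vanishes away from `b`
  have hrow : ∀ j : Fin (k+4), U c j - q * U b j + r * U a j
      = if j = b then 2 * U b c else 0 := by
    intro j
    rcases eq_or_ne j b with hjb | hjb
    · subst hjb
      rw [if_pos rfl, S b c, hdiag b]
      linear_combination hr
    rw [if_neg hjb]
    rcases eq_or_ne j a with hja | hja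
    · subst hja
      rw [S a c, hdiag a, S a b]
      linear_combination -hq
    rcases eq_or_ne j c with hjc | hjc
    · subst hjc
      rw [hdiag c]
      linear_combination (U a c * hr - U b c * hq) / U a b
    have hjlt : j < a := by
      rw [Fin.lt_def]
      have h1 : (j:ℕ) ≠ k+1 := fun h => hja (Fin.ext h)
      have h2 : (j:ℕ) ≠ k+2 := fun h => hjb (Fin.ext h)
      have h3 : (j:ℕ) ≠ k+3 := fun h => hjc (Fin.ext h)
      have h4 := j.isLt
      simp only [ha]
      omega
    have key := hex j a b c hjlt hab hbc
    rw [S j b, S j a, hq', hr']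
    field_simp
    linear_combination key
  have hcol : ∀ i : Fin (k+4), U i c - q * U i b + r * U i a
      = if i = b then 2 * U b c else 0 := by
    intro i
    rw [← S i c, ← S i b, ← S i a]
    exact hrow i
  -- row and column reduction
  set A1 : Matrix (Fin (k+4)) (Fin (k+4)) F := U.updateRow c (U c + (-q) • U b) with hA1'
  set A2 : Matrix (Fin (k+4)) (Fin (k+4)) F := A1.updateRow c (A1 c + r • A1 a) with hA2'
  set A3 : Matrix (Fin (k+4)) (Fin (k+4)) F :=
    A2.updateCol c (fun i => A2 i c + (-q) • A2 i b) with hA3'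
  set M : Matrix (Fin (k+4)) (Fin (k+4)) F :=
    A3.updateCol c (fun i => A3 i c + r • A3 i a) with hM'
  have hdet : M.det = U.det := by
    rw [hM', Matrix.det_updateCol_add_smul_self _ hac.ne' r,
      hA3', Matrix.det_updateCol_add_smul_self _ hbc.ne' (-q),
      hA2', Matrix.det_updateRow_add_smul_self _ hac.ne' r,
      hA1', Matrix.det_updateRow_add_smul_self _ hbc.ne' (-q)]
  have hA2 : ∀ i j, A2 i j = if i = c then U c j - q * U b j + r * U a j else U i j := by
    intro i j
    rcases eq_or_ne i c with hi | hi
    · subst hi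
      rw [hA2', Matrix.updateRow_self, if_pos rfl, hA1']
      simp only [Pi.add_apply, Pi.smul_apply, smul_eq_mul, Matrix.updateRow_self,
        Matrix.updateRow_ne hac.ne]
      ring
    · rw [hA2', Matrix.updateRow_ne hi, hA1', Matrix.updateRow_ne hi, if_neg hi]
  have hMnc : ∀ i j, j ≠ c → M i j = if i = c then (if j = b then 2 * U b c else 0)
      else U i j := by
    intro i j hj
    rw [hM', Matrix.updateCol_ne hj, hA3', Matrix.updateCol_ne hj, hA2]
    rcases eq_or_ne i c with hi | hi
    · simp only [hi, if_pos rfl]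
      exact hrow j
    · simp [hi]
  have hMc : ∀ i, M i c = if i = c then -(2 * q * U b c)
      else (if i = b then 2 * U b c else 0) := by
    intro i
    rw [hM', Matrix.updateCol_self, hA3', Matrix.updateCol_self,
      Matrix.updateCol_ne hac.ne, hA2, hA2, hA2]
    rcases eq_or_ne i c with hi | hi
    · subst hi
      rw [if_pos rfl, if_pos rfl, if_pos rfl, if_pos rfl]
      have e1 := hrow c
      have e2 := hrow b
      have e3 := hrow a
      rw [if_neg (show c ≠ b from hbc.ne')] at e1
      rw [if_pos rfl] at e2
      rw [if_neg (show a ≠ b from hab.ne)] at e3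
      simp only [smul_eq_mul]
      linear_combination e1 + (-q) * e2 + r * e3
    · rw [if_neg hi, if_neg hi, if_neg hi, if_neg hi]
      have := hcol i
      simp only [smul_eq_mul]
      linear_combination this
  -- submatrices
  set U0 : Matrix (Fin (k+3)) (Fin (k+3)) F := U.submatrix Fin.castSucc Fin.castSucc with hU0'
  set U1 : Matrix (Fin (k+2)) (Fin (k+2)) F :=
    U.submatrix (Fin.castSucc ∘ Fin.castSucc) (Fin.castSucc ∘ Fin.castSucc) with hU1'
  have hbdef : b = Fin.castSucc (Fin.last (k+2)) := rfl
  have hminor2 : M.submatrix Fin.castSucc Fin.castSucc = U0 := by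
    ext i j
    rw [Matrix.submatrix_apply, hMnc _ _ (Fin.castSucc_lt_last j).ne,
      if_neg (Fin.castSucc_lt_last i).ne]
    rfl
  have hsuclast : b.succAbove (Fin.last (k+2)) = c := by
    rw [hbdef, Fin.succAbove_castSucc_of_le _ _ le_rfl, Fin.succ_last, hc]
  have hsucmid : ∀ p : Fin (k+2), b.succAbove p.castSucc = p.castSucc.castSucc := by
    intro p
    rw [hbdef, Fin.succAbove_castSucc_of_lt _ _ (Fin.castSucc_lt_last p)]
  have hminor1 : ∀ i : Fin (k+3),
      (M.submatrix Fin.castSucc b.succAbove) i (Fin.last (k+2))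
        = if i = Fin.last (k+2) then 2 * U b c else 0 := by
    intro i
    rw [Matrix.submatrix_apply, hsuclast, hMc, if_neg (Fin.castSucc_lt_last i).ne]
    simp only [hbdef, Fin.castSucc_inj]
  have hinner : (M.submatrix Fin.castSucc b.succAbove).submatrix Fin.castSucc Fin.castSucc
      = U1 := by
    ext i j
    simp only [Matrix.submatrix_apply]
    rw [hsucmid, hMnc _ _ (Fin.castSucc_lt_last j.castSucc).ne,
      if_neg (Fin.castSucc_lt_last i.castSucc).ne]
    rfl
  have hexp2 : (M.submatrix Fin.castSucc b.succAbove).det = (2 * U b c) * U1.det := by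
    rw [Matrix.det_succ_column (M.submatrix Fin.castSucc b.succAbove) (Fin.last (k+2)),
      Fintype.sum_eq_single (Fin.last (k+2))
        (fun i hi => by rw [hminor1, if_neg hi, mul_zero, zero_mul]),
      hminor1, if_pos rfl, Fin.succAbove_last, hinner]
    rw [Fin.val_last, Even.neg_one_pow ⟨k+2, by ring⟩]
    ring
  have hexp1 : M.det = -((2 * U b c) * (M.submatrix Fin.castSucc b.succAbove).det)
      + (-(2 * q * U b c)) * U0.det := by
    rw [Matrix.det_succ_row M c]
    rw [← Finset.sum_subset (Finset.subset_univ ({b, c} : Finset (Fin (k+4))))]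
    · rw [Finset.sum_pair (show b ≠ c from hbc.ne)]
      rw [hMnc c b hbc.ne, if_pos rfl, if_pos rfl, hMc c, if_pos rfl]
      have hcsucc : c.succAbove = Fin.castSucc := by rw [hc]; exact Fin.succAbove_last
      rw [hcsucc, hminor2]

      have hcv : ((c : Fin (k+4)) : ℕ) = k+3 := rfl
      have hbv : ((b : Fin (k+4)) : ℕ) = k+2 := rfl
      rw [hcv, hbv, Odd.neg_one_pow ⟨k+2, by ring⟩, Even.neg_one_pow ⟨k+3, by ring⟩]
      ring
    · intro j _ hj
      simp only [Finset.mem_insert, Finset.mem_singleton, not_or] at hj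
      rw [hMnc c j hj.2, if_pos rfl, if_neg hj.1, mul_zero, zero_mul]
  -- induction hypotheses applied to the two principal submatrices
  have hU0det : U0.det = -(-2:F)^(k+1) * ∏ i : Fin (k+3), U0 i (finRotate (k+3) i) := by
    refine IH0 U0 (Matrix.IsSymm.ext fun i j => S _ _) (fun i => hdiag _)
      (fun i j hij => hnz _ _ (fun h => hij (Fin.castSucc_injective _ h)))
      (fun i j k' l h1 h2 h3 => hex i.castSucc j.castSucc k'.castSucc l.castSucc
        (Fin.castSucc_lt_castSucc_iff.mpr h1) (Fin.castSucc_lt_castSucc_iff.mpr h2)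
        (Fin.castSucc_lt_castSucc_iff.mpr h3))
  have hU1det : U1.det = -(-2:F)^k * ∏ i : Fin (k+2), U1 i (finRotate (k+2) i) := by
    refine IH1 U1 (Matrix.IsSymm.ext fun i j => S _ _) (fun i => hdiag _)
      (fun i j hij => hnz _ _
        (fun h => hij (Fin.castSucc_injective _ (Fin.castSucc_injective _ h))))
      (fun i j k' l h1 h2 h3 => hex i.castSucc.castSucc j.castSucc.castSucc
        k'.castSucc.castSucc l.castSucc.castSucc
        (Fin.castSucc_lt_castSucc_iff.mpr (Fin.castSucc_lt_castSucc_iff.mpr h1))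
        (Fin.castSucc_lt_castSucc_iff.mpr (Fin.castSucc_lt_castSucc_iff.mpr h2))
        (Fin.castSucc_lt_castSucc_iff.mpr (Fin.castSucc_lt_castSucc_iff.mpr h3)))
  -- the cyclic products
  set C : F := ∏ i : Fin (k+1), U1 i.castSucc i.succ with hC'
  have e_a0 : U1 (Fin.last (k+1)) 0 = U a 0 := by
    show U _ _ = U a 0
    congr 1 <;> exact Fin.ext (by simp [ha])
  have e_ab : U0 (Fin.last (k+1)).castSucc (Fin.last (k+2)) = U a b := by
    show U _ _ = U a b
    congr 1 <;> exact Fin.ext (by simp [ha, hb])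
  have e_b0 : U0 (Fin.last (k+2)) 0 = U b 0 := by
    show U _ _ = U b 0
    congr 1 <;> exact Fin.ext (by simp [hb])
  have e_bc : U (Fin.last (k+2)).castSucc (Fin.last (k+3)) = U b c := by
    congr 1 <;> exact Fin.ext (by simp [hb, hc])
  have hp1 : ∏ i : Fin (k+2), U1 i (finRotate (k+2) i) = C * U a 0 := by
    rw [prod_rot', e_a0, hC']
  have hsplit0 : (∏ i : Fin (k+2), U0 i.castSucc i.succ) = C * U a b := by
    rw [consec_split', e_ab]
    congr 1
  have hp0 : ∏ i : Fin (k+3), U0 i (finRotate (k+3) i) = C * U a b * U b 0 := by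
    rw [prod_rot', e_b0, hsplit0]
  have hpU : ∏ i : Fin (k+4), U i (finRotate (k+4) i) = C * U a b * U b c * U c 0 := by
    rw [prod_rot', consec_split', e_bc]
    rw [show (∏ i : Fin (k+2), U i.castSucc.castSucc i.succ.castSucc)
      = ∏ i : Fin (k+2), U0 i.castSucc i.succ from rfl, hsplit0, hc]
  -- final assembly
  rw [← hdet, hexp1, hexp2, hU0det, hU1det, hp0, hp1, hpU]
  rw [show U a 0 = U 0 a from S 0 a, show U b 0 = U 0 b from S 0 b]
  have key := hex 0 a b c h0a hab hbc
  linear_combination (4*(-2:F)^k * C * U b c) * key - (4*(-2:F)^k * C * U b c * U 0 b) * hq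


private lemma frieze_aux (n : ℕ) (U : Matrix (Fin (n+2)) (Fin (n+2)) F)
    (hsym : U.IsSymm)
    (hdiag : ∀ i, U i i = 0)
    (hnz : ∀ i j : Fin (n+2), i ≠ j → U i j ≠ 0)
    (hex : ∀ i j k' l : Fin (n+2), i < j → j < k' → k' < l →
      U i j * U k' l + U j k' * U l i = U i k' * U j l) :
    U.det = -(-2:F)^n * ∏ i : Fin (n+2), U i (finRotate (n+2) i) := by
  induction n using Nat.strong_induction_on with
  | _ n IH =>
    match n, U, hsym, hdiag, hnz, hex, IH with
    | 0, U, hsym, hdiag, hnz, hex, IH => ?_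
    | 1, U, hsym, hdiag, hnz, hex, IH => ?_
    | (k+2), U, hsym, hdiag, hnz, hex, IH => ?_
    · rw [prod_rot', Matrix.det_fin_two, Fin.prod_univ_one,
        show ((0:Fin 1).castSucc) = (0:Fin 2) from rfl, show ((0:Fin 1).succ) = (1:Fin 2) from rfl,
        show (Fin.last 1) = (1:Fin 2) from rfl]
      simp [hdiag]
    · rw [prod_rot', Matrix.det_fin_three, Fin.prod_univ_two]
      have h1 := hsym.apply 0 1
      have h2 := hsym.apply 0 2
      have h3 := hsym.apply 1 2
      simp only [hdiag]
      rw [show ((0:Fin 2).castSucc) = (0:Fin 3) from rfl, show ((0:Fin 2).succ) = (1:Fin 3) from rfl,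
        show ((1:Fin 2).castSucc) = (1:Fin 3) from rfl, show ((1:Fin 2).succ) = (2:Fin 3) from rfl,
        show (Fin.last 2) = (2:Fin 3) from rfl]
      rw [h1, h2, h3]
      ring
    · exact frieze_step k U hsym hdiag hnz hex
        (fun V h1 h2 h3 h4 => IH (k+1) (by omega) V h1 h2 h3 h4)
        (fun V h1 h2 h3 h4 => IH k (by omega) V h1 h2 h3 h4)

end FriezeHelpers

/-- Frieze pattern determinant for a symmetric zero-diagonal matrix with nonzero
off-diagonal entries satisfying the cyclic Ptolemy/Plücker exchange relations. -/
theorem frieze_det {F : Type*} [Field F] (n : ℕ) (hn : 3 ≤ n)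
    (U : Matrix (Fin n) (Fin n) F)
    (hsym : U.IsSymm)
    (hdiag : ∀ i, U i i = 0)
    (hnz : ∀ i j : Fin n, i ≠ j → U i j ≠ 0)
    (hex : ∀ i j k l : Fin n, i < j → j < k → k < l →
      U i j * U k l + U j k * U l i = U i k * U j l) :
    U.det = -(-2 : F) ^ (n - 2) * ∏ i : Fin n, U i (finRotate n i) := by
  obtain ⟨m, rfl⟩ : ∃ m, n = m + 2 := ⟨n - 2, by omega⟩
  rw [show m + 2 - 2 = m from rfl]
  exact frieze_aux m U hsym hdiag hnz hex
end

section
/- Let $n \geq 3$, let $\pi$ be a triangulation of a convex $n$-gon, and let $M(\pi) = (m_{ij})$ be the associated Conway–Coxeter frieze matrix, defined by $m_{ii} = 0$, $m_{i,i+1} = 1$, and the recurrence $m_{i-1,j+1} = (m_{i-1,j} m_{i+1,j} - 1)/m_{ij}$ with $m_{ji} = m_{ij}$. Then $\det(M(\pi)) = -(-2)^{n-2}$. -/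
set_option linter.unusedSectionVars false
set_option maxHeartbeats 1000000



lemma frieze_cast_ne_zero {n : ℕ} [NeZero n] {k : ℕ} (h1 : 1 ≤ k) (h2 : k < n) : ((k : ZMod n)) ≠ 0 := by
  intro h
  have := ZMod.val_cast_of_lt h2
  rw [h] at this
  simp [ZMod.val_zero] at this
  omega

lemma frieze_key {n : ℕ} [NeZero n] (hn : 3 ≤ n) (M : Matrix (ZMod n) (ZMod n) ℤ)
    (hdiag : ∀ i, M i i = 0)
    (hone : ∀ i, M i (i + 1) = 1)
    (hpos : ∀ i j : ZMod n, i ≠ j → 0 < M i j)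
    (hrule : ∀ i j : ZMod n, j ≠ i - 1 →
      M (i - 1) j * M i (j + 1) - M i j * M (i - 1) (j + 1) = 1) :
    ∀ i j : ZMod n, j ≠ i → M (i-1) j + M (i+1) j = M (i-1) (i+1) * M i j := by
  intro i j hj
  have main : ∀ k : ℕ, k ≤ n - 2 →
      M (i-1) (i+1+(k:ZMod n)) + M (i+1) (i+1+(k:ZMod n))
        = M (i-1) (i+1) * M i (i+1+(k:ZMod n)) := by
    intro k hk
    induction k with
    | zero => simpa [hdiag, hone] using rfl
    | succ k ih =>
      have hk' : k ≤ n - 2 := by omega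
      have IH := ih hk'
      set j' : ZMod n := i + 1 + (k : ZMod n) with hj'
      -- j' = i + (1+k) with 1 ≤ 1+k ≤ n-2
      have hne1 : ((1 + k : ℕ) : ZMod n) ≠ 0 := frieze_cast_ne_zero (by omega) (by omega)
      have hne2 : ((2 + k : ℕ) : ZMod n) ≠ 0 := frieze_cast_ne_zero (by omega) (by omega)
      have hji : j' ≠ i := by
        intro h
        apply hne1
        push_cast
        linear_combination h
      have hji1 : j' ≠ i - 1 := by
        intro h
        apply hne2
        push_cast
        linear_combination h
      have h1 := hrule i j' hji1
      have h2 := hrule (i+1) j' (by rwa [add_sub_cancel_right])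
      rw [add_sub_cancel_right] at h2
      have hMij : M i j' ≠ 0 := ne_of_gt (hpos i j' (Ne.symm hji))
      have key2 : M i j' * (M (i-1) (j'+1) + M (i+1) (j'+1))
          = M i j' * (M (i-1) (i+1) * M i (j'+1)) := by
        linear_combination (-1) * h1 + h2 + M i (j'+1) * IH
      have := mul_left_cancel₀ hMij key2
      have harg : i + 1 + ((k+1 : ℕ) : ZMod n) = j' + 1 := by
        push_cast; rw [hj']; ring
      rw [harg]
      exact this
  obtain ⟨hv1, hv2⟩ : 1 ≤ (j-i).val ∧ (j-i).val ≤ n - 1 := by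
    have h1 : (j-i).val < n := ZMod.val_lt _
    have h2 : (j-i).val ≠ 0 := by
      rw [Ne, ZMod.val_eq_zero, sub_eq_zero]; exact hj
    omega
  have hc : (((j-i).val : ℕ) : ZMod n) = j - i := ZMod.natCast_rightInverse _
  have hsplit : ((j-i).val : ℕ) = 1 + ((j-i).val - 1) := by omega
  rw [hsplit] at hc
  push_cast at hc
  have hjj : j = i + 1 + (((j-i).val - 1 : ℕ) : ZMod n) := by linear_combination -hc
  have := main ((j-i).val - 1) (by omega)
  rw [← hjj] at this
  exact this

lemma frieze_keyc {n : ℕ} [NeZero n] (hn : 3 ≤ n) (M : Matrix (ZMod n) (ZMod n) ℤ)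
    (hsym : M.IsSymm)
    (hdiag : ∀ i, M i i = 0)
    (hone : ∀ i, M i (i + 1) = 1)
    (hpos : ∀ i j : ZMod n, i ≠ j → 0 < M i j)
    (hrule : ∀ i j : ZMod n, j ≠ i - 1 →
      M (i - 1) j * M i (j + 1) - M i j * M (i - 1) (j + 1) = 1) :
    ∀ i j : ZMod n, i ≠ j → M i (j-1) + M i (j+1) = M (j-1) (j+1) * M i j := by
  intro i j hij
  have h := frieze_key hn M hdiag hone hpos hrule j i hij
  rw [hsym.apply i (j-1), hsym.apply i (j+1), hsym.apply i j] at h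
  exact h

lemma frieze_ear {n : ℕ} [NeZero n] (hn : 3 ≤ n) (M : Matrix (ZMod n) (ZMod n) ℤ)
    (hsym : M.IsSymm)
    (hdiag : ∀ i, M i i = 0)
    (hone : ∀ i, M i (i + 1) = 1)
    (hpos : ∀ i j : ZMod n, i ≠ j → 0 < M i j)
    (hrule : ∀ i j : ZMod n, j ≠ i - 1 →
      M (i - 1) j * M i (j + 1) - M i j * M (i - 1) (j + 1) = 1) :
    ∃ v : ZMod n, M (v-1) (v+1) = 1 := by
  by_contra hno
  push_neg at hno
  have ha : ∀ v : ZMod n, 2 ≤ M (v-1) (v+1) := by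
    intro v
    have hne : v - 1 ≠ v + 1 := by
      intro h
      refine frieze_cast_ne_zero (n := n) (k := 2) (by omega) (by omega) ?_
      push_cast
      linear_combination -h
    have h1 := hpos _ _ hne
    have h2 := hno v
    omega
  set s : ℕ → ℤ := fun k => M 0 ((k : ℕ) : ZMod n) with hs
  have grow : ∀ k : ℕ, k ≤ n - 1 → (k : ℤ) ≤ s k ∧ s k + 1 ≤ s (k+1) := by
    intro k
    induction k with
    | zero =>
      intro _
      constructor
      · simp [hs, hdiag]
      · have h1 := hone 0
        show M 0 ((0:ℕ) : ZMod n) + 1 ≤ M 0 ((0+1 : ℕ) : ZMod n)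
        rw [show ((0:ℕ) : ZMod n) = 0 by push_cast; rfl,
          show ((0+1:ℕ) : ZMod n) = 0 + 1 by push_cast; ring, hdiag, h1]
        norm_num
    | succ k ih =>
      intro hk
      obtain ⟨h1, h2⟩ := ih (by omega)
      have hgek : ((k+1 : ℕ) : ℤ) ≤ s (k+1) := by push_cast at h1 ⊢; omega
      refine ⟨hgek, ?_⟩
      have hjne : ((k+1 : ℕ) : ZMod n) ≠ 0 := frieze_cast_ne_zero (by omega) (by omega)
      have hkeyc := frieze_keyc hn M hsym hdiag hone hpos hrule 0 ((k+1 : ℕ) : ZMod n)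
        (Ne.symm hjne)
      have e1 : ((k+1 : ℕ) : ZMod n) - 1 = ((k : ℕ) : ZMod n) := by push_cast; ring
      have e2 : ((k+1 : ℕ) : ZMod n) + 1 = ((k+2 : ℕ) : ZMod n) := by push_cast; ring
      rw [e1, e2] at hkeyc
      have hA : 2 ≤ M (((k:ℕ) : ZMod n)) (((k+2:ℕ)) : ZMod n) := by
        have := ha (((k+1:ℕ)) : ZMod n)
        rwa [e1, e2] at this
      have hspos : (1:ℤ) ≤ s (k+1) := by push_cast at hgek; omega
      simp only [hs] at hkeyc ⊢
      nlinarith [hkeyc, hA, hspos]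
  have hfin := grow (n-1) le_rfl
  have hzero : s n = 0 := by simp [hs, ZMod.natCast_self, hdiag]
  have hrw : n - 1 + 1 = n := by omega
  rw [hrw] at hfin
  have := hfin.1
  have := hfin.2
  have hc : ((n-1:ℕ):ℤ) = (n:ℤ) - 1 := by push_cast [Nat.cast_sub (by omega : 1 ≤ n)]; ring
  rw [hzero] at *
  omega

lemma frieze_step_s4 (n : ℕ) [NeZero n] (hn : 3 ≤ n)
    (M : Matrix (ZMod (n+1)) (ZMod (n+1)) ℤ)
    (hsym : M.IsSymm)
    (hdiag : ∀ i, M i i = 0)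
    (hone : ∀ i, M i (i + 1) = 1)
    (hpos : ∀ i j : ZMod (n+1), i ≠ j → 0 < M i j)
    (hrule : ∀ i j : ZMod (n+1), j ≠ i - 1 →
      M (i - 1) j * M i (j + 1) - M i j * M (i - 1) (j + 1) = 1)
    (hear : M (-1-1) (-1+1) = 1) :
    ∃ M' : Matrix (ZMod n) (ZMod n) ℤ, M'.IsSymm ∧ (∀ i, M' i i = 0) ∧
      (∀ i, M' i (i + 1) = 1) ∧ (∀ i j : ZMod n, i ≠ j → 0 < M' i j) ∧
      (∀ i j : ZMod n, j ≠ i - 1 →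
        M' (i - 1) j * M' i (j + 1) - M' i j * M' (i - 1) (j + 1) = 1) ∧
      M.det = -2 * M'.det := by
  have hn1 : 3 ≤ n + 1 := by omega
  set f : ZMod n → ZMod (n+1) := fun k => ((k.val : ℕ) : ZMod (n+1)) with hf
  have fval : ∀ i : ZMod n, (f i).val = i.val := fun i =>
    ZMod.val_cast_of_lt (lt_trans (ZMod.val_lt i) (Nat.lt_succ_self n))
  have finj : Function.Injective f := fun a b h => by
    apply ZMod.val_injective
    rw [← fval a, ← fval b, h]
  have fcast : ∀ k : ℕ, k < n → f ((k : ℕ) : ZMod n) = ((k : ℕ) : ZMod (n+1)) := by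
    intro k hk
    simp only [hf, ZMod.val_cast_of_lt hk]
  have frepr : ∀ i : ZMod n, i = ((i.val : ℕ) : ZMod n) :=
    fun i => (ZMod.natCast_rightInverse i).symm
  have fne : ∀ i : ZMod n, f i ≠ -1 := by
    intro i h
    have h1 := fval i
    rw [h] at h1
    have h2 : (-1 : ZMod (n+1)).val = n := ZMod.val_neg_one n
    have := ZMod.val_lt i
    omega
  have hneg1 : (-1 : ZMod n) = ((n - 1 : ℕ) : ZMod n) := by
    have h : ((n - 1 : ℕ) : ZMod n) + 1 = 0 := by
      rw [show (1 : ZMod n) = ((1:ℕ) : ZMod n) by push_cast; rfl, ← Nat.cast_add,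
        show n - 1 + 1 = n by omega, ZMod.natCast_self]
    linear_combination -h
  have hneg2 : (-2 : ZMod (n+1)) = ((n - 1 : ℕ) : ZMod (n+1)) := by
    have h : ((n - 1 : ℕ) : ZMod (n+1)) + 2 = 0 := by
      rw [show (2 : ZMod (n+1)) = ((2:ℕ) : ZMod (n+1)) by push_cast; rfl, ← Nat.cast_add,
        show n - 1 + 2 = n + 1 by omega, ZMod.natCast_self]
    linear_combination -h
  have flast : f (-1) = -2 := by
    rw [hneg1, fcast (n-1) (by omega), hneg2]
  have f0 : f 0 = 0 := by
    rw [show (0 : ZMod n) = ((0:ℕ) : ZMod n) by push_cast; rfl, fcast 0 (by omega)]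
    push_cast; rfl
  have hval_ne : ∀ i : ZMod n, i ≠ -1 → i.val < n - 1 := by
    intro i hi
    have h1 := ZMod.val_lt i
    rcases Nat.lt_or_ge i.val (n-1) with h | h
    · exact h
    · exfalso; apply hi
      rw [frepr i, show i.val = n - 1 by omega, ← hneg1]
  have fadd : ∀ i : ZMod n, i ≠ -1 → f (i + 1) = f i + 1 := by
    intro i hi
    have h1 := hval_ne i hi
    have e1 : i + 1 = ((i.val + 1 : ℕ) : ZMod n) := by
      nth_rewrite 1 [frepr i]; push_cast; ring
    rw [e1, fcast _ (by omega)]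
    simp only [hf]
    push_cast
    ring
  have hvpos : ∀ i : ZMod n, i ≠ 0 → 1 ≤ i.val := by
    intro i hi
    have h := (ZMod.val_eq_zero i).not.mpr hi
    omega
  have fsub : ∀ i : ZMod n, i ≠ 0 → f (i - 1) = f i - 1 := by
    intro i hi
    have hv := hvpos i hi
    have e1 : ((i.val - 1 : ℕ) : ZMod n) = i - 1 := by
      have h : ((i.val - 1 : ℕ) : ZMod n) + 1 = i := by
        rw [show (1 : ZMod n) = ((1:ℕ) : ZMod n) by push_cast; rfl, ← Nat.cast_add,
          show i.val - 1 + 1 = i.val by omega, ← frepr i]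
      linear_combination h
    have e2 : ((i.val - 1 : ℕ) : ZMod (n+1)) = f i - 1 := by
      have h : ((i.val - 1 : ℕ) : ZMod (n+1)) + 1 = f i := by
        simp only [hf]
        rw [show (1 : ZMod (n+1)) = ((1:ℕ) : ZMod (n+1)) by push_cast; rfl, ← Nat.cast_add,
          show i.val - 1 + 1 = i.val by omega]
      linear_combination h
    rw [← e1, fcast _ (by have := ZMod.val_lt i; omega), e2]
  -- normalized ear
  have hear' : M (-2) 0 = 1 := by
    rw [show (-2 : ZMod (n+1)) = -1-1 by ring, show (0 : ZMod (n+1)) = -1+1 by ring]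
    exact hear
  -- key identities at the ear
  have hK : ∀ x : ZMod (n+1), x ≠ -1 → M (-2) x = M (-1) x - M 0 x := by
    intro x hx
    have h := frieze_key hn1 M hdiag hone hpos hrule (-1) x hx
    rw [show (-1 : ZMod (n+1)) - 1 = -2 by ring, show (-1 : ZMod (n+1)) + 1 = 0 by ring,
      hear'] at h
    linarith
  have hKc : ∀ x : ZMod (n+1), x ≠ -1 → M x (-2) = M x (-1) - M x 0 := by
    intro x hx
    have h := frieze_keyc hn1 M hsym hdiag hone hpos hrule x (-1) hx
    rw [show (-1 : ZMod (n+1)) - 1 = -2 by ring, show (-1 : ZMod (n+1)) + 1 = 0 by ring,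
      hear'] at h
    linarith
  -- the minor
  set M' : Matrix (ZMod n) (ZMod n) ℤ := Matrix.of (fun i j => M (f i) (f j)) with hM'
  have hM'app : ∀ i j, M' i j = M (f i) (f j) := fun i j => rfl
  refine ⟨M', ?_, ?_, ?_, ?_, ?_, ?_⟩
  · -- symm
    ext i j
    rw [Matrix.transpose_apply, hM'app, hM'app]
    exact hsym.apply _ _
  · intro i
    rw [hM'app]
    exact hdiag _
  · -- hone'
    intro i
    by_cases hi : i = -1
    · subst hi
      rw [show (-1 : ZMod n) + 1 = 0 by ring, hM'app, flast, f0]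
      exact hear'
    · rw [hM'app, fadd i hi]
      exact hone (f i)
  · intro i j hij
    rw [hM'app]
    exact hpos _ _ (fun h => hij (finj h))
  · -- hrule'
    intro i j hj
    by_cases hi : i = 0
    · subst hi
      have hj' : j ≠ -1 := by rwa [show (0 : ZMod n) - 1 = -1 by ring] at hj
      simp only [hM'app]
      rw [show (0 : ZMod n) - 1 = -1 by ring, flast, f0, fadd j hj']
      have hK1 := hK (f j) (fne j)
      have hK2 := hK (f j + 1) (by rw [← fadd j hj']; exact fne _)
      have hr := hrule 0 (f j) (by rw [show (0:ZMod (n+1)) - 1 = -1 by ring]; exact fne j)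
      rw [show (0:ZMod (n+1)) - 1 = -1 by ring] at hr
      linear_combination hr + M 0 (f j + 1) * hK1 - M 0 (f j) * hK2
    · by_cases hjl : j = -1
      · subst hjl
        simp only [hM'app]
        rw [show (-1 : ZMod n) + 1 = 0 by ring, flast, f0, fsub i hi]
        have hfi0 : f i ≠ 0 := by rw [← f0]; exact fun h => hi (finj h)
        have hKc1 := hKc (f i) (fne i)
        have hKc2 := hKc (f i - 1) (by rw [← fsub i hi]; exact fne _)
        have hr := hrule (f i) (-1) (by
          intro h
          apply hfi0
          linear_combination -h)
        rw [show (-1 : ZMod (n+1)) + 1 = 0 by ring] at hr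
        linear_combination hr + M (f i) 0 * hKc2 - M (f i - 1) 0 * hKc1
      · simp only [hM'app]
        rw [fsub i hi, fadd j hjl]
        exact hrule (f i) (f j) (by
          intro h
          apply hj
          apply finj
          rw [fsub i hi, h])
  · -- determinant
    classical
    set r : ZMod (n+1) → ℤ := fun j => if j = -1 then 2 else 0 with hr
    set N : Matrix (ZMod (n+1)) (ZMod (n+1)) ℤ := M.updateRow (-1) r with hN
    have hm2ne : (-2 : ZMod (n+1)) ≠ -1 := by
      intro h
      have h1 : (1 : ZMod (n+1)) = 0 := by linear_combination -h
      have := frieze_cast_ne_zero (n := n+1) (k := 1) le_rfl (by omega)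
      simp at this
      exact this h1
    have h0ne : (0 : ZMod (n+1)) ≠ -1 := by
      intro h
      have h1 : (1 : ZMod (n+1)) = 0 := by linear_combination h
      have := frieze_cast_ne_zero (n := n+1) (k := 1) le_rfl (by omega)
      simp at this
      exact this h1
    have hrfun : r = (M (-2) + (M 0 + (-1 : ℤ) • M (-1))) := by
      funext x
      by_cases hx : x = -1
      · subst hx
        have e1 : M (-2) (-1) = 1 := by
          have := hone (-2)
          rwa [show (-2 : ZMod (n+1)) + 1 = -1 by ring] at this
        have e2 : M 0 (-1) = 1 := by
          rw [← hsym.apply]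
          have := hone (-1)
          rwa [show (-1 : ZMod (n+1)) + 1 = 0 by ring] at this
        simp only [hr, if_pos rfl, Pi.add_apply, Pi.smul_apply, smul_eq_mul]
        rw [e1, e2, hdiag]
        ring
      · have hK1 := hK x hx
        simp only [hr, if_neg hx, Pi.add_apply, Pi.smul_apply, smul_eq_mul]
        linarith
    have hdetN : N.det = - M.det := by
      rw [hN, hrfun, Matrix.det_updateRow_add, Matrix.det_updateRow_add]
      have z1 : (M.updateRow (-1) (M (-2))).det = 0 := by
        apply Matrix.det_zero_of_row_eq (i := (-2 : ZMod (n+1))) (j := -1) hm2ne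
        rw [Matrix.updateRow_self, Matrix.updateRow_ne hm2ne]
      have z2 : (M.updateRow (-1) (M 0)).det = 0 := by
        apply Matrix.det_zero_of_row_eq (i := (0 : ZMod (n+1))) (j := -1) h0ne
        rw [Matrix.updateRow_self, Matrix.updateRow_ne h0ne]
      rw [z1, z2, Matrix.det_updateRow_smul, Matrix.updateRow_eq_self]
      ring
    -- block decomposition
    set e : ZMod (n+1) ≃ (ZMod n ⊕ Unit) := {
      toFun := fun x => if x = -1 then Sum.inr () else Sum.inl ((x.val : ZMod n))
      invFun := Sum.elim f (fun _ => -1)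
      left_inv := by
        intro x
        by_cases hx : x = -1
        · simp [hx]
        · simp only [if_neg hx, Sum.elim_inl]
          have hxv : x.val < n := by
            have h1 := ZMod.val_lt x
            have h2 : x.val ≠ n := by
              intro h
              apply hx
              apply ZMod.val_injective
              rw [h, ZMod.val_neg_one]
            omega
          simp only [hf]
          rw [show ((x.val : ℕ) : ZMod n).val = x.val from ZMod.val_cast_of_lt hxv]
          exact ZMod.natCast_rightInverse x
      right_inv := by
        intro s
        rcases s with k | u
        · simp only [Sum.elim_inl, if_neg (fne k)]
          congr 1
          rw [fval k]
          exact (if_neg (fne k)).trans (congrArg Sum.inl (frepr k).symm)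
        · simp }
      with he
    have hesymm_inl : ∀ i : ZMod n, e.symm (Sum.inl i) = f i := fun i => rfl
    have hesymm_inr : e.symm (Sum.inr ()) = -1 := rfl
    set B : Matrix (ZMod n) Unit ℤ := Matrix.of (fun i _ => M (f i) (-1)) with hB
    set D : Matrix Unit Unit ℤ := Matrix.of (fun _ _ => (2:ℤ)) with hD
    have hblock : N.submatrix e.symm e.symm = Matrix.fromBlocks M' B 0 D := by
      ext s t
      rcases s with i | u <;> rcases t with j | v
      · simp only [Matrix.submatrix_apply, hesymm_inl, Matrix.fromBlocks_apply₁₁]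
        rw [hN, Matrix.updateRow_ne (fne i), hM'app]
      · simp only [Matrix.submatrix_apply, hesymm_inl, hesymm_inr, Matrix.fromBlocks_apply₁₂]
        rw [hN, Matrix.updateRow_ne (fne i), hB]
        rfl
      · simp only [Matrix.submatrix_apply, hesymm_inl, hesymm_inr, Matrix.fromBlocks_apply₂₁]
        rw [hN, Matrix.updateRow_self]
        simp only [hr, if_neg (fne j)]
        rfl
      · simp only [Matrix.submatrix_apply, hesymm_inr, Matrix.fromBlocks_apply₂₂]
        rw [hN, Matrix.updateRow_self]
        simp only [hr, if_pos rfl]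
        rfl
    have hdetN2 : N.det = M'.det * 2 := by
      have h1 : (N.submatrix e.symm e.symm).det = N.det := Matrix.det_submatrix_equiv_self _ _
      rw [← h1, hblock, Matrix.det_fromBlocks_zero₂₁]
      congr 1
    rw [hdetN2] at hdetN
    linarith


lemma frieze_aux_s4 : ∀ n : ℕ, 3 ≤ n → ∀ [NeZero n], ∀ M : Matrix (ZMod n) (ZMod n) ℤ,
    M.IsSymm → (∀ i, M i i = 0) → (∀ i, M i (i + 1) = 1) →
    (∀ i j : ZMod n, i ≠ j → 0 < M i j) →
    (∀ i j : ZMod n, j ≠ i - 1 →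
      M (i - 1) j * M i (j + 1) - M i j * M (i - 1) (j + 1) = 1) →
    M.det = -(-2 : ℤ) ^ (n - 2) := by
  intro n hn
  induction n, hn using Nat.le_induction with
  | base =>
    intro _ M hsym hdiag hone hpos hrule
    let e : Fin 3 ≃ ZMod 3 := Equiv.cast rfl
    have hdet : (M.submatrix e e).det = M.det := Matrix.det_submatrix_equiv_self e M
    rw [← hdet, Matrix.det_fin_three]
    simp only [Matrix.submatrix_apply]
    have e0 : e 0 = 0 := rfl
    have e1 : e 1 = 1 := by rfl
    have e2 : e 2 = 2 := by rfl
    rw [e0, e1, e2]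
    have h01 : M 0 1 = 1 := by have := hone 0; rwa [zero_add] at this
    have h12 : M 1 2 = 1 := hone 1
    have h20 : M 2 0 = 1 := by
      have := hone 2; rwa [show (2+1 : ZMod 3) = 0 by decide] at this
    have h10 : M 1 0 = 1 := by rw [hsym.apply, h01]
    have h21 : M 2 1 = 1 := by rw [hsym.apply, h12]
    have h02 : M 0 2 = 1 := by rw [← hsym.apply, h20]
    rw [hdiag, hdiag, hdiag, h01, h12, h20, h10, h21, h02]
    norm_num
  | succ n hn IH =>
    intro _ M hsym hdiag hone hpos hrule
    haveI : NeZero n := ⟨by omega⟩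
    obtain ⟨v, hv⟩ := frieze_ear (by omega) M hsym hdiag hone hpos hrule
    set c : ZMod (n+1) := v + 1 with hc
    set Mr : Matrix (ZMod (n+1)) (ZMod (n+1)) ℤ :=
      M.submatrix (Equiv.addRight c) (Equiv.addRight c) with hMr
    have hMrapp : ∀ i j, Mr i j = M (i + c) (j + c) := fun i j => rfl
    have hsymr : Mr.IsSymm := by
      ext i j
      rw [Matrix.transpose_apply, hMrapp, hMrapp]
      exact hsym.apply _ _
    have hdiagr : ∀ i, Mr i i = 0 := fun i => hdiag _
    have honer : ∀ i, Mr i (i + 1) = 1 := by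
      intro i
      rw [hMrapp, show i + 1 + c = (i + c) + 1 by ring]
      exact hone _
    have hposr : ∀ i j : ZMod (n+1), i ≠ j → 0 < Mr i j := by
      intro i j hij
      rw [hMrapp]
      exact hpos _ _ (fun h => hij (by linear_combination h))
    have hruler : ∀ i j : ZMod (n+1), j ≠ i - 1 →
        Mr (i - 1) j * Mr i (j + 1) - Mr i j * Mr (i - 1) (j + 1) = 1 := by
      intro i j hij
      rw [hMrapp, hMrapp, hMrapp, hMrapp, show i - 1 + c = (i + c) - 1 by ring,
        show j + 1 + c = (j + c) + 1 by ring]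
      exact hrule (i + c) (j + c) (fun h => hij (by linear_combination h))
    have hearr : Mr (-1-1) (-1+1) = 1 := by
      rw [hMrapp, show (-1-1+c : ZMod (n+1)) = v - 1 by rw [hc]; ring,
        show (-1+1+c : ZMod (n+1)) = v + 1 by rw [hc]; ring]
      exact hv
    obtain ⟨M', h1, h2, h3, h4, h5, h6⟩ :=
      frieze_step_s4 n hn Mr hsymr hdiagr honer hposr hruler hearr
    have hdet : Mr.det = M.det := Matrix.det_submatrix_equiv_self _ _
    have hM' := IH M' h1 h2 h3 h4 h5
    rw [← hdet, h6, hM', show n + 1 - 2 = (n - 2) + 1 by omega]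
    ring


/-- Broline–Crowe–Isaacs: the determinant of a Conway–Coxeter frieze matrix, i.e. a
symmetric zero-diagonal integer matrix with `m_{i,i+1} = 1`, positive off-diagonal
entries, and satisfying the frieze (unimodular) recurrence, equals `-(-2)^(n-2)`. -/
theorem frieze_matrix_det (n : ℕ) [NeZero n] (hn : 3 ≤ n)
    (M : Matrix (ZMod n) (ZMod n) ℤ)
    (hsym : M.IsSymm)
    (hdiag : ∀ i, M i i = 0)
    (hone : ∀ i, M i (i + 1) = 1)
    (hpos : ∀ i j : ZMod n, i ≠ j → 0 < M i j)
    (hrule : ∀ i j : ZMod n, j ≠ i - 1 →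
      M (i - 1) j * M i (j + 1) - M i j * M (i - 1) (j + 1) = 1) :
    M.det = -(-2 : ℤ) ^ (n - 2) := by
  exact frieze_aux_s4 n hn M hsym hdiag hone hpos hrule
end

section
/- Let $n \geq 2$, and consider subsets $C$ of positions $(i,j)$ with $1 \leq i,j \leq n$ and $i \neq j$, such that no two elements of $C$ share a row or a column. If $C$ is maximal with respect to inclusion among such subsets, then $|C| = n-1$ or $|C| = n$. -/
/-- A maximal set of off-diagonal positions in an `n × n` grid, no two in the same row or
column, has cardinality `n - 1` or `n`. -/
theorem framefree_card (n : ℕ) (hn : 2 ≤ n) (C : Finset (Fin n × Fin n))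
    (hoff : ∀ p ∈ C, p.1 ≠ p.2)
    (hrc : ∀ p ∈ C, ∀ q ∈ C, p ≠ q → p.1 ≠ q.1 ∧ p.2 ≠ q.2)
    (hmax : ∀ p : Fin n × Fin n, p.1 ≠ p.2 → p ∉ C →
      ∃ q ∈ C, p.1 = q.1 ∨ p.2 = q.2) :
    C.card = n - 1 ∨ C.card = n := by
  classical
  have hA : (C.image Prod.fst).card = C.card := by
    apply Finset.card_image_of_injOn
    intro p hp q hq h
    by_contra hne
    exact (hrc p hp q hq hne).1 h
  have hB : (C.image Prod.snd).card = C.card := by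
    apply Finset.card_image_of_injOn
    intro p hp q hq h
    by_contra hne
    exact (hrc p hp q hq hne).2 h
  have hle : C.card ≤ n := by
    rw [← hA]
    simpa using Finset.card_le_univ (C.image Prod.fst)
  have hge : n - 1 ≤ C.card := by
    by_contra hlt
    push_neg at hlt
    have hAc : 2 ≤ ((C.image Prod.fst)ᶜ).card := by
      rw [Finset.card_compl, hA, Fintype.card_fin]
      omega
    have hBc : 0 < ((C.image Prod.snd)ᶜ).card := by
      rw [Finset.card_compl, hB, Fintype.card_fin]
      omega
    obtain ⟨a, ha, b, hb, hab⟩ := Finset.one_lt_card.mp hAc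
    obtain ⟨c, hc⟩ := Finset.card_pos.mp hBc
    rw [Finset.mem_compl] at ha hb hc
    have key : ∀ i : Fin n, i ∉ C.image Prod.fst → i ≠ c → False := by
      intro i hi hic
      have hp : (i, c) ∉ C := fun h => hi (Finset.mem_image_of_mem _ h)
      obtain ⟨q, hq, hq'⟩ := hmax (i, c) hic hp
      rcases hq' with h | h
      · exact hi (Finset.mem_image.mpr ⟨q, hq, h.symm⟩)
      · exact hc (Finset.mem_image.mpr ⟨q, hq, h.symm⟩)
    rcases eq_or_ne a c with h | h
    · exact key b hb (fun hbc => hab ((hbc.trans h.symm)).symm)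
    · exact key a ha h
  omega
end

section
/- Let $n \geq 2$. The maximal (under inclusion) sets of off-diagonal positions $\{(i,j): i \neq j\}$ in an $n \times n$ grid with no two positions in the same row or column, having cardinality exactly $n-1$, are in bijection with permutations of $\{1,\ldots,n\}$ having exactly one fixed point; hence their number is $D_n + (-1)^{n-1}$. -/
open Equiv Function Finset

private lemma aux_fixone_card (n : ℕ) (a : Fin n) :
    Fintype.card {f : Perm (Fin n) // (Finset.univ.filter fun i => f i = i) = {a}} =
      numDerangements (n - 1) := by
  have e1 := derangements.subtypeEquiv (fun x : Fin n => x ≠ a)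
  have e2 : {f : Perm (Fin n) // ∀ x : Fin n, ¬ x ≠ a ↔ x ∈ fixedPoints f} ≃
      {f : Perm (Fin n) // (Finset.univ.filter fun i => f i = i) = {a}} := by
    refine Equiv.subtypeEquivRight fun f => ?_
    rw [Finset.ext_iff]
    constructor
    · intro h x
      have := (h x).symm
      simp only [not_not, mem_fixedPoints, IsFixedPt] at this
      simp [this]
    · intro h x
      have := h x
      simp only [Finset.mem_filter, Finset.mem_univ, true_and, Finset.mem_singleton] at this
      simp [mem_fixedPoints, IsFixedPt, ← this]
  have := Fintype.card_congr ((e1.trans e2).symm)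
  rw [this, card_derangements_eq_numDerangements]
  congr 1
  simp [Fintype.card_subtype_compl]

private lemma aux_count (n : ℕ) :
    (Finset.univ.filter fun σ : Perm (Fin n) => (Finset.univ.filter fun i => σ i = i).card = 1).card
      = n * numDerangements (n - 1) := by
  have hT : (Finset.univ.filter fun σ : Perm (Fin n) => (Finset.univ.filter fun i => σ i = i).card = 1)
      = Finset.univ.biUnion (fun a : Fin n =>
          Finset.univ.filter fun σ : Perm (Fin n) => (Finset.univ.filter fun i => σ i = i) = {a}) := by
    ext σ
    simp [Finset.card_eq_one]
  rw [hT, Finset.card_biUnion]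
  · rw [Finset.sum_congr rfl (fun a _ => by rw [← Fintype.card_subtype, aux_fixone_card n a])]
    simp [mul_comm]
  · intro a _ b _ hab
    simp only [Finset.disjoint_left, Finset.mem_filter]
    rintro σ ⟨-, h1⟩ ⟨-, h2⟩
    exact hab (Finset.singleton_injective (h1 ▸ h2))

private lemma aux_int (n : ℕ) (hn : 2 ≤ n) :
    ((n * numDerangements (n - 1) : ℕ) : ℤ)
      = (∑ k ∈ Finset.range (n + 1), (-1 : ℤ) ^ k * ((n.factorial / k.factorial : ℕ) : ℤ))
        + (-1) ^ (n - 1) := by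
  obtain ⟨m, rfl⟩ : ∃ m, n = m + 1 := ⟨n - 1, by omega⟩
  have h1 := numDerangements_succ m
  have h2 := numDerangements_sum (m + 1)
  have h3 : ∀ k ∈ Finset.range (m + 1 + 1),
      (-1 : ℤ) ^ k * ((k + 1).ascFactorial (m + 1 - k) : ℤ)
        = (-1 : ℤ) ^ k * (((m + 1).factorial / k.factorial : ℕ) : ℤ) := by
    intro k hk
    rw [Finset.mem_range] at hk
    rw [Nat.ascFactorial_eq_div, show k + (m + 1 - k) = m + 1 from by omega]
  rw [Finset.sum_congr rfl h3] at h2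
  rw [Nat.add_sub_cancel, ← h2, h1]
  push_cast
  ring

private lemma aux_bijon (n : ℕ) (hn : 2 ≤ n) :
    Set.BijOn
      (fun σ : Equiv.Perm (Fin n) =>
        (Finset.univ.filter fun i => σ i ≠ i).image (fun i => (i, σ i)))
      {σ : Equiv.Perm (Fin n) | (Finset.univ.filter fun i => σ i = i).card = 1}
      {C : Finset (Fin n × Fin n) | C.card = n - 1 ∧ (∀ p ∈ C, p.1 ≠ p.2) ∧
        (∀ p ∈ C, ∀ q ∈ C, p ≠ q → p.1 ≠ q.1 ∧ p.2 ≠ q.2) ∧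
        ∀ p : Fin n × Fin n, p.1 ≠ p.2 → p ∉ C → ∃ q ∈ C, p.1 = q.1 ∨ p.2 = q.2} := by
  constructor
  · -- MapsTo
    intro σ hσ
    simp only [Set.mem_setOf_eq] at hσ ⊢
    obtain ⟨a, ha⟩ := Finset.card_eq_one.mp hσ
    refine ⟨?_, ?_, ?_, ?_⟩
    · rw [Finset.card_image_of_injOn (fun i _ j _ h => (Prod.ext_iff.mp h).1),
        Finset.filter_not, Finset.card_sdiff_of_subset (Finset.filter_subset _ _), ha]
      simp
    · rintro p hp
      simp only [Finset.mem_image, Finset.mem_filter] at hp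
      obtain ⟨i, ⟨-, hi⟩, rfl⟩ := hp
      exact fun h => hi h.symm
    · rintro p hp q hq hpq
      simp only [Finset.mem_image, Finset.mem_filter] at hp hq
      obtain ⟨i, ⟨-, hi⟩, rfl⟩ := hp
      obtain ⟨j, ⟨-, hj⟩, rfl⟩ := hq
      have hij : i ≠ j := fun h => hpq (by rw [h])
      exact ⟨hij, fun h => hij (σ.injective h)⟩
    · rintro ⟨x, y⟩ hxy hC
      simp only [ne_eq] at hxy
      by_cases hx : σ x = x
      · by_cases hy : σ y = y
        · exfalso
          have hxa : x = a := by
            have : x ∈ Finset.univ.filter fun i => σ i = i := by simp [hx]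
            rw [ha] at this; simpa using this
          have hya : y = a := by
            have : y ∈ Finset.univ.filter fun i => σ i = i := by simp [hy]
            rw [ha] at this; simpa using this
          exact hxy (hxa.trans hya.symm)
        · refine ⟨(σ.symm y, y), ?_, Or.inr rfl⟩
          simp only [Finset.mem_image, Finset.mem_filter]
          have h1 : σ (σ.symm y) = y := σ.apply_symm_apply y
          refine ⟨σ.symm y, ⟨Finset.mem_univ _, fun h => hy ?_⟩, by simp [h1]⟩
          rw [h1] at h
          conv_lhs => rw [h]
          exact h1
      · exact ⟨(x, σ x), by simp [Finset.mem_image, Finset.mem_filter, hx]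
          , Or.inl rfl⟩
  constructor
  · -- InjOn
    intro σ hσ τ hτ h
    simp only at h
    apply Equiv.ext
    intro i
    by_cases hi : σ i = i
    · by_contra hne
      have hτi : τ i ≠ i := fun h' => hne (hi.trans h'.symm)
      have : (i, τ i) ∈ (Finset.univ.filter fun j => σ j ≠ j).image (fun j => (j, σ j)) := by
        rw [h]; simp [Finset.mem_image, Finset.mem_filter, hτi]
      simp only [Finset.mem_image, Finset.mem_filter] at this
      obtain ⟨j, ⟨-, hj⟩, hj2⟩ := this
      obtain ⟨h1, h2⟩ := Prod.ext_iff.mp hj2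
      subst h1
      exact hj hi
    · have : (i, σ i) ∈ (Finset.univ.filter fun j => τ j ≠ j).image (fun j => (j, τ j)) := by
        rw [← h]; simp [Finset.mem_image, Finset.mem_filter, hi]
      simp only [Finset.mem_image, Finset.mem_filter] at this
      obtain ⟨j, ⟨-, hj⟩, hj2⟩ := this
      obtain ⟨h1, h2⟩ := Prod.ext_iff.mp hj2
      subst h1
      exact h2.symm
  · rintro C ⟨hcard, hoff, hdist, hmax⟩
    set R : Finset (Fin n) := C.image Prod.fst with hR
    set L : Finset (Fin n) := C.image Prod.snd with hL
    have hfstinj : Set.InjOn Prod.fst (C : Set (Fin n × Fin n)) := by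
      intro p hp q hq hpq
      by_contra hne
      exact (hdist p hp q hq hne).1 hpq
    have hsndinj : Set.InjOn Prod.snd (C : Set (Fin n × Fin n)) := by
      intro p hp q hq hpq
      by_contra hne
      exact (hdist p hp q hq hne).2 hpq
    have hRcard : R.card = n - 1 := by rw [hR, Finset.card_image_of_injOn hfstinj, hcard]
    have hLcard : L.card = n - 1 := by rw [hL, Finset.card_image_of_injOn hsndinj, hcard]
    obtain ⟨r, hr⟩ : ∃ r, Finset.univ \ R = {r} := by
      apply Finset.card_eq_one.mp
      rw [Finset.card_sdiff_of_subset (Finset.subset_univ _), hRcard, Finset.card_univ, Fintype.card_fin]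
      omega
    obtain ⟨c, hc⟩ : ∃ c, Finset.univ \ L = {c} := by
      apply Finset.card_eq_one.mp
      rw [Finset.card_sdiff_of_subset (Finset.subset_univ _), hLcard, Finset.card_univ, Fintype.card_fin]
      omega
    have hrR : ∀ i : Fin n, i ∉ R ↔ i = r := by
      intro i
      rw [← Finset.mem_singleton, ← hr, Finset.mem_sdiff]
      simp
    have hcL : ∀ i : Fin n, i ∉ L ↔ i = c := by
      intro i
      rw [← Finset.mem_singleton, ← hc, Finset.mem_sdiff]
      simp
    have hrc : r = c := by
      by_contra hne
      have hnotC : (r, c) ∉ C := fun hmem =>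
        ((hrR r).mpr rfl) (Finset.mem_image_of_mem Prod.fst hmem)
      obtain ⟨q, hq, hq2⟩ := hmax (r, c) hne hnotC
      rcases hq2 with h | h
      · exact ((hrR r).mpr rfl) (by rw [show r = q.1 from h]; exact Finset.mem_image_of_mem Prod.fst hq)
      · exact ((hcL c).mpr rfl) (by rw [show c = q.2 from h]; exact Finset.mem_image_of_mem Prod.snd hq)
    have hu : ∀ i ∈ R, ∃! q, q ∈ C ∧ q.1 = i := by
      intro i hi
      obtain ⟨q, hq, hq1⟩ := Finset.mem_image.mp hi
      refine ⟨q, ⟨hq, hq1⟩, ?_⟩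
      rintro q' ⟨hq', hq1'⟩
      exact hfstinj hq' hq (hq1'.trans hq1.symm)
    set f : Fin n → Fin n := fun i =>
      if h : i ∈ R then (Finset.choose (fun q => q.1 = i) C (hu i h)).2 else i with hf
    have hfmem : ∀ i (h : i ∈ R), (i, f i) ∈ C := by
      intro i h
      have h1 := Finset.choose_mem (fun q => q.1 = i) C (hu i h)
      have h2 := Finset.choose_property (fun q => q.1 = i) C (hu i h)
      have : (i, f i) = Finset.choose (fun q => q.1 = i) C (hu i h) := by
        rw [hf]; simp only [dif_pos h]
        exact Prod.ext h2.symm rfl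
      rw [this]; exact h1
    have hfne : ∀ i ∈ R, f i ≠ i := fun i h heq => hoff _ (hfmem i h) heq.symm
    have hfL : ∀ i ∈ R, f i ∈ L := fun i h => Finset.mem_image_of_mem Prod.snd (hfmem i h)
    have hfnot : ∀ i ∉ R, f i = i := fun i h => by rw [hf]; simp only [dif_neg h]
    have hinj : Function.Injective f := by
      intro i j hij
      by_cases hi : i ∈ R <;> by_cases hj : j ∈ R
      · have hqi := hfmem i hi
        have hqj := hfmem j hj
        have := hsndinj hqi hqj hij
        exact congrArg Prod.fst this
      · exfalso
        have hfiL : f i ∈ L := hfL i hi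
        rw [hij, hfnot j hj, (hrR j).mp hj, hrc] at hfiL
        exact ((hcL c).mpr rfl) hfiL
      · exfalso
        have hfjL : f j ∈ L := hfL j hj
        rw [← hij, hfnot i hi, (hrR i).mp hi, hrc] at hfjL
        exact ((hcL c).mpr rfl) hfjL
      · rw [(hrR i).mp hi, (hrR j).mp hj]
    have hbij : Function.Bijective f := Finite.injective_iff_bijective.mp hinj
    set σ : Equiv.Perm (Fin n) := Equiv.ofBijective f hbij with hσdef
    have hσf : ∀ i, σ i = f i := fun i => rfl
    have hfilter : (Finset.univ.filter fun i => σ i ≠ i) = R := by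
      ext i
      simp only [Finset.mem_filter, Finset.mem_univ, true_and, hσf]
      constructor
      · intro hne
        by_contra hiR
        exact hne (hfnot i hiR)
      · exact hfne i
    refine ⟨σ, ?_, ?_⟩
    · show (Finset.univ.filter fun i => σ i = i).card = 1
      have : (Finset.univ.filter fun i => σ i = i) = {r} := by
        rw [← hr]
        ext i
        simp only [Finset.mem_filter, Finset.mem_univ, true_and, Finset.mem_sdiff, hσf]
        constructor
        · intro h hiR
          exact hfne i hiR h
        · intro hiR
          exact hfnot i hiR
      rw [this, Finset.card_singleton]
    · show (Finset.univ.filter fun i => σ i ≠ i).image (fun i => (i, σ i)) = C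
      rw [hfilter]
      apply Finset.eq_of_subset_of_card_le
      · intro p hp
        simp only [Finset.mem_image, hσf] at hp
        obtain ⟨i, hi, rfl⟩ := hp
        exact hfmem i hi
      · rw [Finset.card_image_of_injOn (fun i _ j _ h => (Prod.ext_iff.mp h).1), hRcard, hcard]

/-- Maximal frame-free configurations of cardinality `n-1` are in bijection (via
`σ ↦ {(i, σ i) : σ i ≠ i}`) with permutations having exactly one fixed point, and hence
number `D_n + (-1)^(n-1)`. -/
theorem configs_card_pred_bij (n : ℕ) (hn : 2 ≤ n) :
    Set.BijOn
      (fun σ : Equiv.Perm (Fin n) =>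
        (Finset.univ.filter fun i => σ i ≠ i).image (fun i => (i, σ i)))
      {σ : Equiv.Perm (Fin n) | (Finset.univ.filter fun i => σ i = i).card = 1}
      {C : Finset (Fin n × Fin n) | C.card = n - 1 ∧ (∀ p ∈ C, p.1 ≠ p.2) ∧
        (∀ p ∈ C, ∀ q ∈ C, p ≠ q → p.1 ≠ q.1 ∧ p.2 ≠ q.2) ∧
        ∀ p : Fin n × Fin n, p.1 ≠ p.2 → p ∉ C → ∃ q ∈ C, p.1 = q.1 ∨ p.2 = q.2}
    ∧ (({C : Finset (Fin n × Fin n) | C.card = n - 1 ∧ (∀ p ∈ C, p.1 ≠ p.2) ∧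
        (∀ p ∈ C, ∀ q ∈ C, p ≠ q → p.1 ≠ q.1 ∧ p.2 ≠ q.2) ∧
        ∀ p : Fin n × Fin n, p.1 ≠ p.2 → p ∉ C → ∃ q ∈ C, p.1 = q.1 ∨ p.2 = q.2}.ncard : ℤ)
      = (∑ k ∈ Finset.range (n + 1), (-1 : ℤ) ^ k * ((n.factorial / k.factorial : ℕ) : ℤ))
        + (-1) ^ (n - 1)) := by
  have hbij := aux_bijon n hn
  refine ⟨hbij, ?_⟩
  rw [← hbij.image_eq, Set.ncard_image_of_injOn hbij.injOn]
  have hS : {σ : Equiv.Perm (Fin n) | (Finset.univ.filter fun i => σ i = i).card = 1}.ncard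
      = (Finset.univ.filter fun σ : Perm (Fin n) =>
          (Finset.univ.filter fun i => σ i = i).card = 1).card := by
    rw [Set.ncard_eq_toFinset_card']
    congr 1
    simp [Set.toFinset_setOf]
  rw [hS, aux_count]
  exact aux_int n hn
end

section
/- Let $n \geq 3$ and let $U = (u_{ij})$ be a symmetric $n \times n$ matrix with zero diagonal over a field, whose off-diagonal entries are nonzero and satisfy the cyclic exchange relations $u_{ij}u_{kl} + u_{jk}u_{li} = u_{ik}u_{jl}$ for all $i,j,k,l$ in clockwise cyclic order. Then $\sum_{\sigma} \operatorname{sgn}(\sigma) \prod_{i=1}^{n} u_{i,\sigma(i)} = -(-2)^{n-2} u_{12} u_{23} \cdots u_{n-1,n} u_{n,1}$, where the sum is over all derangements $\sigma$ of $\{1, \ldots, n\}$. -/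
open Matrix Finset

namespace FriezeDet

variable {F : Type*} [Field F] {n : ℕ}

/-- cross product of the 2D vectors attached to indices `i, j`. -/
def ff (x y : Fin n → F) (i j : Fin n) : F := x i * y j - x j * y i

/-- `k - d` inside `Fin n`. -/
def pm (k : Fin n) (d : ℕ) : Fin n := ⟨k.val - d, lt_of_le_of_lt (Nat.sub_le _ _) k.isLt⟩

@[simp] lemma pm_val (k : Fin n) (d : ℕ) : (pm k d).val = k.val - d := rfl

lemma permMatrix_apply (σ : Equiv.Perm (Fin n)) (i j : Fin n) :
    Equiv.Perm.permMatrix F σ i j = if σ i = j then 1 else 0 := by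
  simp [Equiv.Perm.permMatrix, PEquiv.toMatrix_apply, Equiv.toPEquiv, eq_comm]

lemma finRotate_val (hn : 1 ≤ n) (j : Fin n) :
    ((finRotate n) j).val = if j.val + 1 = n then 0 else j.val + 1 := by
  obtain ⟨m, rfl⟩ : ∃ m, n = m + 1 := ⟨n-1, by omega⟩
  rw [finRotate_succ_apply, Fin.val_add_one]
  rcases eq_or_ne j (Fin.last m) with h | h
  · simp [h, Fin.val_last]
  · have hv : j.val ≠ m := by simpa [Fin.ext_iff] using h
    rw [if_neg h, if_neg (by omega)]

/-- first row-reduction matrix. -/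
def Lm (x y : Fin n → F) : Matrix (Fin n) (Fin n) F := fun k j =>
  if k = j then 1 else if k.val < 2 then 0
  else if j.val + 1 = k.val then -(ff x y (pm k 2) k / ff x y (pm k 2) (pm k 1))
  else if j.val + 2 = k.val then ff x y (pm k 1) k / ff x y (pm k 2) (pm k 1)
  else 0

/-- result of first row reduction. -/
def Wm (U : Matrix (Fin n) (Fin n) F) : Matrix (Fin n) (Fin n) F := fun k j =>
  if k.val < 2 then U k j else if j.val + 1 = k.val then 2 * U j k else 0

/-- second row-reduction matrix (clears rows 0 and 1 except at columns 0, n-1). -/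
def L2m (U : Matrix (Fin n) (Fin n) F) : Matrix (Fin n) (Fin n) F := fun k m =>
  if k = m then 1 else if k.val < 2 ∧ 2 ≤ m.val then -(U k (pm m 1) / (2 * U (pm m 1) m)) else 0

def W2m (U : Matrix (Fin n) (Fin n) F) : Matrix (Fin n) (Fin n) F := fun k j =>
  if 2 ≤ k.val then (if j.val + 1 = k.val then 2 * U j k else 0)
  else if j.val = 0 ∨ j.val + 1 = n then U k j else 0

def L3m (hn : 3 ≤ n) (U : Matrix (Fin n) (Fin n) F) : Matrix (Fin n) (Fin n) F := fun k m =>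
  if k = m then 1
  else if k.val = 1 ∧ m.val = 0 then
    -(U ⟨1, by omega⟩ ⟨n-1, by omega⟩ / U ⟨0, by omega⟩ ⟨n-1, by omega⟩)
  else 0

def W3m (hn : 3 ≤ n) (U : Matrix (Fin n) (Fin n) F) : Matrix (Fin n) (Fin n) F := fun k j =>
  if 2 ≤ k.val then (if j.val + 1 = k.val then 2 * U j k else 0)
  else if k.val = 0 then (if j.val + 1 = n then U ⟨0, by omega⟩ ⟨n-1, by omega⟩ else 0)
  else (if j.val = 0 then U ⟨0, by omega⟩ ⟨1, by omega⟩ else 0)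

/-- the diagonal factors. -/
def dd (hn : 3 ≤ n) (U : Matrix (Fin n) (Fin n) F) : Fin n → F := fun k =>
  if k.val = 0 then U ⟨0, by omega⟩ ⟨n-1, by omega⟩
  else if k.val = 1 then U ⟨0, by omega⟩ ⟨1, by omega⟩
  else 2 * U (pm k 1) k

section Aux

variable (hn : 3 ≤ n) (x y : Fin n → F) (U : Matrix (Fin n) (Fin n) F)
  (hsym : U.IsSymm) (hdiag : ∀ i, U i i = 0)
  (hnz : ∀ i j : Fin n, i ≠ j → U i j ≠ 0)
  (hU : ∀ i j : Fin n, i < j → U i j = ff x y i j)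

include hsym hdiag hnz hU in
lemma row_id (k : Fin n) (hk : 2 ≤ k.val) (j : Fin n) :
    U k j - (ff x y (pm k 2) k / ff x y (pm k 2) (pm k 1)) * U (pm k 1) j
      + (ff x y (pm k 1) k / ff x y (pm k 2) (pm k 1)) * U (pm k 2) j
    = if j.val + 1 = k.val then 2 * U j k else 0 := by
  set a := pm k 2 with ha
  set b := pm k 1 with hb
  have hav : a.val = k.val - 2 := rfl
  have hbv : b.val = k.val - 1 := rfl
  have hab : a < b := by rw [Fin.lt_def]; omega
  have hbk : b < k := by rw [Fin.lt_def]; omega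
  have hak : a < k := lt_trans hab hbk
  have hD : ff x y a b ≠ 0 := by rw [← hU a b hab]; exact hnz a b (ne_of_lt hab)
  rcases (show j.val < k.val - 2 ∨ j.val = k.val - 2 ∨ j.val = k.val - 1 ∨ j.val = k.val
      ∨ k.val < j.val by omega) with hj | hj | hj | hj | hj
  · have hja : j < a := by rw [Fin.lt_def]; omega
    rw [if_neg (by omega), hsym.apply j k, hsym.apply j b, hsym.apply j a,
      hU j k (lt_trans hja hak), hU j b (lt_trans hja hab), hU j a hja]
    field_simp
    simp only [ff]; ring
  · have hja : j = a := Fin.ext (by omega)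
    rw [hja, if_neg (by omega), hsym.apply a k, hsym.apply a b,
      hU a k hak, hU a b hab, hdiag a]
    field_simp
    ring
  · have hjb : j = b := Fin.ext (by omega)
    rw [hjb, if_pos (by omega), hsym.apply b k, hU b k hbk, hdiag b, hU a b hab]
    field_simp
    ring
  · have hjk : j = k := Fin.ext (by omega)
    rw [hjk, if_neg (by omega), hdiag k, hU b k hbk, hU a k hak]
    field_simp
    ring
  · have hkj : k < j := by rw [Fin.lt_def]; omega
    rw [if_neg (by omega), hU k j hkj, hU b j (lt_trans hbk hkj), hU a j (lt_trans hak hkj)]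
    field_simp
    simp only [ff]; ring

include hsym hdiag hnz hU in
lemma step1 : Lm x y * U = Wm U := by
  ext k j
  rw [Matrix.mul_apply]
  by_cases hk : k.val < 2
  · have he : ∀ m : Fin n, Lm x y k m * U m j = if k = m then U m j else 0 := by
      intro m
      simp only [Lm]
      by_cases h : k = m
      · simp [h]
      · simp [h, hk]
    rw [Finset.sum_congr rfl fun m _ => he m, Finset.sum_ite_eq]
    simp [Wm, hk]
  · push_neg at hk
    set a := pm k 2 with ha
    set b := pm k 1 with hb
    have hav : a.val = k.val - 2 := rfl
    have hbv : b.val = k.val - 1 := rfl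
    have hkb : k ≠ b := fun h => by rw [Fin.ext_iff] at h; omega
    have hka : k ≠ a := fun h => by rw [Fin.ext_iff] at h; omega
    have hba : b ≠ a := fun h => by rw [Fin.ext_iff] at h; omega
    have hsub : ∀ m ∈ Finset.univ, m ∉ ({k, b, a} : Finset (Fin n)) → Lm x y k m * U m j = 0 := by
      intro m _ hm
      simp only [Finset.mem_insert, Finset.mem_singleton, not_or] at hm
      obtain ⟨h1, h2, h3⟩ := hm
      simp only [Lm]
      rw [if_neg (fun hc => h1 hc.symm), if_neg (by omega),
        if_neg (fun hc => h2 (Fin.ext (by omega))),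
        if_neg (fun hc => h3 (Fin.ext (by omega))), zero_mul]
    rw [← Finset.sum_subset (Finset.subset_univ {k, b, a}) hsub]
    rw [Finset.sum_insert (by simp [hkb, hka]), Finset.sum_insert (by simp [hba]),
      Finset.sum_singleton]
    have e1 : Lm x y k k = 1 := by simp [Lm]
    have e2 : Lm x y k b = -(ff x y a k / ff x y a b) := by
      simp only [Lm]
      rw [if_neg hkb, if_neg (by omega), if_pos (by omega), ha, hb]
    have e3 : Lm x y k a = ff x y b k / ff x y a b := by
      simp only [Lm]
      rw [if_neg hka, if_neg (by omega), if_neg (by omega), if_pos (by omega), ha, hb]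
    rw [e1, one_mul, e2, e3]
    have hr := row_id x y U hsym hdiag hnz hU k hk j
    have hw : Wm U k j = if j.val + 1 = k.val then 2 * U j k else 0 := by
      simp only [Wm]; rw [if_neg (by omega)]
    rw [hw]
    linear_combination hr

include hnz in
lemma step2 (h2 : (2:F) ≠ 0) : L2m U * Wm U = W2m U := by
  ext k j
  rw [Matrix.mul_apply]
  have hjlt := j.isLt
  by_cases hk : k.val < 2
  · by_cases hj : 1 ≤ j.val ∧ j.val + 2 ≤ n
    · set js : Fin n := ⟨j.val + 1, by omega⟩ with hjs
      have hkjs : k ≠ js := fun h => by rw [Fin.ext_iff] at h; simp [hjs] at h; omega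
      have hsub : ∀ m ∈ Finset.univ, m ∉ ({k, js} : Finset (Fin n)) →
          L2m U k m * Wm U m j = 0 := by
        intro m _ hm
        simp only [Finset.mem_insert, Finset.mem_singleton, not_or] at hm
        simp only [L2m, Wm]
        rw [if_neg (fun hc => hm.1 hc.symm)]
        by_cases h2 : k.val < 2 ∧ 2 ≤ m.val
        · rw [if_pos h2, if_neg (by omega),
            if_neg (fun hc => hm.2 (Fin.ext (by simp [hjs]; omega))), mul_zero]
        · rw [if_neg h2, zero_mul]
      rw [← Finset.sum_subset (Finset.subset_univ {k, js}) hsub]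
      rw [Finset.sum_insert (by simpa using hkjs), Finset.sum_singleton]
      have e1 : L2m U k k = 1 := by simp [L2m]
      have e2 : L2m U k js = -(U k (pm js 1) / (2 * U (pm js 1) js)) := by
        simp only [L2m]
        rw [if_neg hkjs, if_pos ⟨hk, by simp [hjs]; omega⟩]
      have hpm : pm js 1 = j := Fin.ext (by simp [hjs])
      have w1 : Wm U k j = U k j := by simp [Wm, hk]
      have w2 : Wm U js j = 2 * U j js := by
        simp only [Wm]
        rw [if_neg (by simp [hjs]; omega), if_pos (by simp [hjs])]
      rw [e1, one_mul, e2, hpm, w1, w2]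
      have hUj : U j js ≠ 0 := hnz _ _ (fun h => by rw [Fin.ext_iff] at h; simp [hjs] at h)
      have hW2 : W2m U k j = 0 := by
        simp only [W2m]
        rw [if_neg (by omega), if_neg (by omega)]
      rw [hW2]
      field_simp [h2, hUj]
      ring
    · have hsub : ∀ m ∈ Finset.univ, m ∉ ({k} : Finset (Fin n)) →
          L2m U k m * Wm U m j = 0 := by
        intro m _ hm
        simp only [Finset.mem_singleton] at hm
        simp only [L2m, Wm]
        rw [if_neg (fun hc => hm hc.symm)]
        by_cases h2 : k.val < 2 ∧ 2 ≤ m.val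
        · have hmlt := m.isLt
          rw [if_pos h2, if_neg (by omega), if_neg (by omega), mul_zero]
        · rw [if_neg h2, zero_mul]
      rw [← Finset.sum_subset (Finset.subset_univ {k}) hsub, Finset.sum_singleton]
      have e1 : L2m U k k = 1 := by simp [L2m]
      rw [e1, one_mul]
      simp only [Wm, W2m]
      rw [if_pos hk, if_neg (by omega), if_pos (by omega)]
  · have he : ∀ m : Fin n, L2m U k m * Wm U m j = if k = m then Wm U m j else 0 := by
      intro m
      simp only [L2m]
      by_cases h : k = m
      · simp [h]
      · rw [if_neg h, if_neg (by omega), zero_mul, if_neg h]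
    rw [Finset.sum_congr rfl fun m _ => he m, Finset.sum_ite_eq]
    simp only [Finset.mem_univ, if_true]
    simp only [Wm, W2m]
    rw [if_neg hk, if_pos (show 2 ≤ k.val by omega)]

include hn hsym hdiag hnz in
lemma step3 : L3m hn U * W2m U = W3m hn U := by
  ext k j
  rw [Matrix.mul_apply]
  have hjlt := j.isLt
  have hklt := k.isLt
  by_cases hk1 : k.val = 1
  · set i0 : Fin n := ⟨0, by omega⟩ with hi0
    set i1 : Fin n := ⟨1, by omega⟩ with hi1
    set lst : Fin n := ⟨n - 1, by omega⟩ with hlst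
    have hki0 : k ≠ i0 := fun h => by rw [Fin.ext_iff] at h; simp [hi0] at h; omega
    have hsub : ∀ m ∈ Finset.univ, m ∉ ({k, i0} : Finset (Fin n)) →
        L3m hn U k m * W2m U m j = 0 := by
      intro m _ hm
      simp only [Finset.mem_insert, Finset.mem_singleton, not_or] at hm
      simp only [L3m]
      rw [if_neg (fun hc => hm.1 hc.symm),
        if_neg (fun hc => hm.2 (Fin.ext (by simp [hi0]; omega))), zero_mul]
    rw [← Finset.sum_subset (Finset.subset_univ {k, i0}) hsub]
    rw [Finset.sum_insert (by simpa using hki0), Finset.sum_singleton]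
    have e1 : L3m hn U k k = 1 := by simp [L3m]
    have e2 : L3m hn U k i0 = -(U i1 lst / U i0 lst) := by
      simp only [L3m]
      rw [if_neg hki0, if_pos ⟨hk1, by simp [hi0]⟩]
    have hkeq : k = i1 := Fin.ext (by simp [hi1, hk1])
    have w3 : W3m hn U k j = if j.val = 0 then U i0 i1 else 0 := by
      simp only [W3m]
      rw [if_neg (by omega), if_neg (by omega)]
    rw [e1, one_mul, e2, w3]
    by_cases hj0 : j.val = 0
    · have hji0 : j = i0 := Fin.ext (by simp [hi0, hj0])
      have w1 : W2m U k j = U k j := by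
        simp only [W2m]; rw [if_neg (by omega), if_pos (Or.inl hj0)]
      have w2 : W2m U i0 j = U i0 j := by
        simp only [W2m]; rw [if_neg (by simp [hi0]), if_pos (Or.inl hj0)]
      rw [w1, w2, if_pos hj0, hji0, hdiag i0, mul_zero, add_zero, hkeq, hsym.apply i0 i1]
    · by_cases hjn : j.val + 1 = n
      · have hjlst : j = lst := Fin.ext (by simp [hlst]; omega)
        have w1 : W2m U k j = U k j := by
          simp only [W2m]; rw [if_neg (by omega), if_pos (Or.inr hjn)]
        have w2 : W2m U i0 j = U i0 j := by
          simp only [W2m]; rw [if_neg (by simp [hi0]), if_pos (Or.inr hjn)]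
        have h0l : U i0 lst ≠ 0 := hnz _ _ (fun h => by
          rw [Fin.ext_iff] at h; simp [hi0, hlst] at h; omega)
        rw [w1, w2, if_neg hj0, hkeq, hjlst]
        field_simp
        ring
      · have w1 : W2m U k j = 0 := by
          simp only [W2m]; rw [if_neg (by omega), if_neg (by omega)]
        have w2 : W2m U i0 j = 0 := by
          simp only [W2m]; rw [if_neg (by simp [hi0]), if_neg (by omega)]
        rw [w1, w2, if_neg hj0, mul_zero, add_zero]
  · have he : ∀ m : Fin n, L3m hn U k m * W2m U m j = if k = m then W2m U m j else 0 := by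
      intro m
      simp only [L3m]
      by_cases h : k = m
      · simp [h]
      · rw [if_neg h, if_neg (fun hc => hk1 hc.1), zero_mul, if_neg h]
    rw [Finset.sum_congr rfl fun m _ => he m, Finset.sum_ite_eq]
    simp only [Finset.mem_univ, if_true]
    simp only [W2m, W3m]
    by_cases hk0 : k.val = 0
    · rw [if_neg (show ¬ 2 ≤ k.val by omega), if_neg (show ¬ 2 ≤ k.val by omega), if_pos hk0]
      by_cases hjn : j.val + 1 = n
      · rw [if_pos (Or.inr hjn), if_pos hjn]
        have h1 : k = (⟨0, by omega⟩ : Fin n) := Fin.ext hk0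
        have h2 : j = (⟨n - 1, by omega⟩ : Fin n) := Fin.ext (by simp; omega)
        rw [h1]
        exact congrArg _ h2
      · by_cases hj0 : j.val = 0
        · rw [if_pos (Or.inl hj0), if_neg hjn]
          have h1 : k = j := Fin.ext (by omega)
          rw [h1, hdiag]
        · rw [if_neg (show ¬ (j.val = 0 ∨ j.val + 1 = n) by omega), if_neg hjn]
    · have hk2 : 2 ≤ k.val := by omega
      rw [if_pos hk2, if_pos hk2]

include hn in
lemma w3_eq : W3m hn U = diagonal (dd hn U) * Equiv.Perm.permMatrix F (finRotate n)⁻¹ := by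
  ext k j
  rw [Matrix.diagonal_mul, permMatrix_apply]
  have hjlt := j.isLt
  have hklt := k.isLt
  have hiff : ((finRotate n)⁻¹ k = j) ↔ (k.val = if j.val + 1 = n then 0 else j.val + 1) := by
    rw [Equiv.Perm.inv_def, Equiv.symm_apply_eq, Fin.ext_iff, finRotate_val (by omega) j]
  by_cases hc : (finRotate n)⁻¹ k = j
  · rw [if_pos hc, mul_one]
    have hv := hiff.mp hc
    simp only [W3m, dd]
    by_cases hk0 : k.val = 0
    · have hj : j.val + 1 = n := by split_ifs at hv <;> omega
      rw [if_neg (show ¬ 2 ≤ k.val by omega), if_pos hk0, if_pos hj, if_pos hk0]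
    · by_cases hk1 : k.val = 1
      · have hj : j.val = 0 := by split_ifs at hv <;> omega
        rw [if_neg (show ¬ 2 ≤ k.val by omega), if_neg hk0, if_pos hj,
          if_neg hk0, if_pos hk1]
      · have hk2 : 2 ≤ k.val := by omega
        have hj : j.val + 1 = k.val := by split_ifs at hv <;> omega
        have hpm : pm k 1 = j := Fin.ext (by rw [pm_val]; omega)
        rw [if_pos hk2, if_pos hj, if_neg hk0, if_neg hk1, hpm]
  · rw [if_neg hc, mul_zero]
    have hv : ¬ (k.val = if j.val + 1 = n then 0 else j.val + 1) := fun h => hc (hiff.mpr h)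
    simp only [W3m]
    split_ifs with h1 h2 h3 h4 <;> try rfl
    · exfalso; split_ifs at hv <;> omega
    · exfalso; split_ifs at hv <;> omega
    · exfalso; split_ifs at hv <;> omega

lemma det_L : (Lm x y (n := n)).det = 1 := by
  have h : (Lm x y (n := n)).BlockTriangular OrderDual.toDual := by
    intro i j hij
    have hij' : i < j := hij
    rw [Fin.lt_def] at hij'
    simp only [Lm]
    rw [if_neg (fun hc => by rw [Fin.ext_iff] at hc; omega)]
    split_ifs with h1 h2 h3 <;> first | rfl | omega
  rw [Matrix.det_of_lowerTriangular _ h]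
  have he : ∀ i : Fin n, Lm x y (n := n) i i = 1 := fun i => by simp [Lm]
  simp [he]

lemma det_L2 : (L2m U).det = 1 := by
  have h : (L2m U).BlockTriangular id := by
    intro i j hij
    have hij' : (j : Fin n) < i := hij
    rw [Fin.lt_def] at hij'
    simp only [L2m]
    rw [if_neg (fun hc => by rw [Fin.ext_iff] at hc; omega), if_neg (by omega)]
  rw [Matrix.det_of_upperTriangular h]
  have he : ∀ i : Fin n, L2m U i i = 1 := fun i => by simp [L2m]
  simp [he]

lemma det_L3 : (L3m hn U).det = 1 := by
  have h : (L3m hn U).BlockTriangular OrderDual.toDual := by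
    intro i j hij
    have hij' : i < j := hij
    rw [Fin.lt_def] at hij'
    simp only [L3m]
    rw [if_neg (fun hc => by rw [Fin.ext_iff] at hc; omega), if_neg (by omega)]
  rw [Matrix.det_of_lowerTriangular _ h]
  have he : ∀ i : Fin n, L3m hn U i i = 1 := fun i => by simp [L3m]
  simp [he]

include hn hsym in
lemma prod_dd : ∏ k, dd hn U k = 2 ^ (n - 2) * ∏ i, U i (finRotate n i) := by
  set σ := (finRotate n)⁻¹ with hσdef
  have hdd : ∀ k : Fin n, dd hn U k = (if 2 ≤ k.val then (2:F) else 1) * U (σ k) k := by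
    intro k
    have happ : finRotate n (σ k) = k := Equiv.apply_symm_apply _ _
    have hv := finRotate_val (n := n) (by omega) (σ k)
    rw [happ] at hv
    have hlt := (σ k).isLt
    have hklt := k.isLt
    have hσ : (σ k).val = if k.val = 0 then n - 1 else k.val - 1 := by
      split_ifs at hv ⊢ <;> omega
    simp only [dd]
    by_cases hk0 : k.val = 0
    · rw [if_pos hk0, if_neg (show ¬ 2 ≤ k.val by omega), one_mul]
      have hs : σ k = ⟨n - 1, by omega⟩ := Fin.ext (by rw [hσ, if_pos hk0])
      have hk : k = (⟨0, by omega⟩ : Fin n) := Fin.ext hk0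
      rw [hs, hk]
      exact hsym.apply _ _
    · by_cases hk1 : k.val = 1
      · rw [if_neg hk0, if_pos hk1, if_neg (show ¬ 2 ≤ k.val by omega), one_mul]
        have hs : σ k = ⟨0, by omega⟩ := Fin.ext (by show (σ k).val = 0; rw [hσ, if_neg hk0]; omega)
        have hk : k = (⟨1, by omega⟩ : Fin n) := Fin.ext hk1
        rw [hs, hk]
      · have hk2 : 2 ≤ k.val := by omega
        rw [if_neg hk0, if_neg hk1, if_pos hk2]
        have hs : σ k = pm k 1 := Fin.ext (by rw [hσ, if_neg hk0, pm_val])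
        rw [hs]
  rw [Finset.prod_congr rfl fun k _ => hdd k, Finset.prod_mul_distrib]
  have hpow : (∏ k : Fin n, if 2 ≤ k.val then (2:F) else 1) = 2 ^ (n - 2) := by
    rw [Finset.prod_ite, Finset.prod_const, Finset.prod_const_one, mul_one]
    congr 1
    have hset : (Finset.univ.filter fun k : Fin n => 2 ≤ k.val)
        = Finset.univ \ {(⟨0, by omega⟩ : Fin n), ⟨1, by omega⟩} := by
      ext m
      simp [Fin.ext_iff]
      omega
    rw [hset, Finset.card_sdiff_of_subset (Finset.subset_univ _)]
    rw [Finset.card_insert_of_notMem (by simp [Fin.ext_iff]), Finset.card_singleton]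
    simp
  have hperm : (∏ k : Fin n, U (σ k) k) = ∏ i : Fin n, U i (finRotate n i) := by
    rw [← Equiv.prod_comp (finRotate n) (fun k => U (σ k) k)]
    apply Finset.prod_congr rfl
    intro i _
    rw [hσdef, Equiv.Perm.inv_def, Equiv.symm_apply_apply]
  rw [hpow, hperm]

include hn hsym hdiag hnz hU in
theorem aux : U.det = -(-2 : F) ^ (n - 2) * ∏ i : Fin n, U i (finRotate n i) := by
  by_cases h2 : (2 : F) = 0
  · -- characteristic two: both sides vanish
    have hrhs : -(-2 : F) ^ (n - 2) * ∏ i : Fin n, U i (finRotate n i) = 0 := by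
      rw [show ((-2 : F)) = 0 by rw [show (2:F) = 0 from h2]; ring,
        zero_pow (show n - 2 ≠ 0 by omega)]
      ring
    rw [hrhs]
    obtain ⟨i0, hn0⟩ : ∃ i : Fin n, i.val = 0 := ⟨⟨0, by omega⟩, rfl⟩
    obtain ⟨i1, hn1⟩ : ∃ i : Fin n, i.val = 1 := ⟨⟨1, by omega⟩, rfl⟩
    obtain ⟨i2, hn2⟩ : ∃ i : Fin n, i.val = 2 := ⟨⟨2, by omega⟩, rfl⟩
    have h01 : i0 < i1 := by rw [Fin.lt_def]; omega
    have h12 : i1 < i2 := by rw [Fin.lt_def]; omega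
    have h02 : i0 < i2 := lt_trans h01 h12
    have hd01 : i0 ≠ i1 := ne_of_lt h01
    have hd02 : i0 ≠ i2 := ne_of_lt h02
    have hd12 : i1 ≠ i2 := ne_of_lt h12
    set v : Fin n → F := fun m =>
      if m = i0 then ff x y i1 i2 else if m = i1 then -(ff x y i0 i2)
      else if m = i2 then ff x y i0 i1 else 0 with hv
    have hv0 : v i0 = ff x y i1 i2 := by simp [hv]
    have hv1 : v i1 = -(ff x y i0 i2) := by simp [hv, Ne.symm hd01]
    have hv2 : v i2 = ff x y i0 i1 := by simp [hv, Ne.symm hd02, Ne.symm hd12]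
    have hvne : v ≠ 0 := by
      intro hc
      have h0 : v i0 = 0 := by rw [hc]; rfl
      rw [hv0] at h0
      exact hnz i1 i2 (ne_of_lt h12) (by rw [hU i1 i2 h12]; exact h0)
    have hmul : Matrix.vecMul v U = 0 := by
      funext j
      have hzero : Matrix.vecMul v U j = ∑ m, v m * U m j := rfl
      rw [hzero, Pi.zero_apply]
      have hsub : ∀ m ∈ Finset.univ, m ∉ ({i0, i1, i2} : Finset (Fin n)) →
          v m * U m j = 0 := by
        intro m _ hm
        simp only [Finset.mem_insert, Finset.mem_singleton, not_or] at hm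
        rw [hv]
        simp only [if_neg hm.1, if_neg hm.2.1, if_neg hm.2.2, zero_mul]
      rw [← Finset.sum_subset (Finset.subset_univ {i0, i1, i2}) hsub]
      rw [Finset.sum_insert (by simp [hd01, hd02]),
        Finset.sum_insert (by simp [hd12]), Finset.sum_singleton, hv0, hv1, hv2]
      have hjlt := j.isLt
      rcases (show j.val = 0 ∨ j.val = 1 ∨ j.val = 2 ∨ 3 ≤ j.val by omega)
        with hj | hj | hj | hj
      · have hje : j = i0 := Fin.ext (by omega)
        rw [hje, hdiag i0, hsym.apply i0 i1, hsym.apply i0 i2,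
          hU i0 i1 h01, hU i0 i2 h02]
        ring
      · have hje : j = i1 := Fin.ext (by omega)
        rw [hje, hdiag i1, hsym.apply i1 i2, hU i0 i1 h01, hU i1 i2 h12]
        linear_combination (ff x y i0 i1 * ff x y i1 i2) * h2
      · have hje : j = i2 := Fin.ext (by omega)
        rw [hje, hdiag i2, hU i0 i2 h02, hU i1 i2 h12]
        ring
      · have h0j : i0 < j := by rw [Fin.lt_def]; omega
        have h1j : i1 < j := by rw [Fin.lt_def]; omega
        have h2j : i2 < j := by rw [Fin.lt_def]; omega
        rw [hU i0 j h0j, hU i1 j h1j, hU i2 j h2j]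
        simp only [ff]; ring
    exact Matrix.exists_vecMul_eq_zero_iff.mp ⟨v, hvne, hmul⟩
  · have hdet : U.det = (W3m hn U).det := by
      rw [← step3 hn U hsym hdiag hnz, ← step2 U hnz h2, ← step1 x y U hsym hdiag hnz hU]
      rw [det_mul, det_mul, det_mul, det_L x y, det_L2 U, det_L3 hn U]
      ring
    rw [hdet, w3_eq hn U, det_mul, det_diagonal, det_permutation, prod_dd hn U hsym]
    have hsign : Equiv.Perm.sign (finRotate n)⁻¹ = (-1) ^ (n - 1) := by
      rw [Equiv.Perm.sign_inv]
      obtain ⟨m, rfl⟩ : ∃ m, n = m + 1 := ⟨n-1, by omega⟩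
      simp [sign_finRotate]
    rw [hsign]
    have hn1 : n - 1 = (n - 2) + 1 := by omega
    rw [hn1]
    push_cast
    rw [show ((-2:F))^(n-2) = (-1)^(n-2) * 2^(n-2) by rw [neg_pow]]
    ring

end Aux

end FriezeDet

open FriezeDet in
/-- The frieze determinant theorem, stated via the Leibniz expansion over derangements. -/
theorem frieze_det_derangement_sum {F : Type*} [Field F] (n : ℕ) (hn : 3 ≤ n)
    (U : Matrix (Fin n) (Fin n) F)
    (hsym : U.IsSymm)
    (hdiag : ∀ i, U i i = 0)
    (hnz : ∀ i j : Fin n, i ≠ j → U i j ≠ 0)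
    (hex : ∀ i j k l : Fin n, i < j → j < k → k < l →
      U i j * U k l + U j k * U l i = U i k * U j l) :
    ∑ σ ∈ Finset.univ.filter (fun σ : Equiv.Perm (Fin n) => ∀ i, σ i ≠ i),
        ((Equiv.Perm.sign σ : ℤ) : F) * ∏ i : Fin n, U i (σ i)
      = -(-2 : F) ^ (n - 2) * ∏ i : Fin n, U i (finRotate n i) := by
  have hsum : ∑ σ ∈ Finset.univ.filter (fun σ : Equiv.Perm (Fin n) => ∀ i, σ i ≠ i),
        ((Equiv.Perm.sign σ : ℤ) : F) * ∏ i : Fin n, U i (σ i) = U.det := by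
    rw [Matrix.det_apply']
    have hterm : ∀ σ : Equiv.Perm (Fin n),
        ((Equiv.Perm.sign σ : ℤ) : F) * ∏ i : Fin n, U (σ i) i
        = ((Equiv.Perm.sign σ : ℤ) : F) * ∏ i : Fin n, U i (σ i) := by
      intro σ; congr 1; exact Finset.prod_congr rfl fun i _ => hsym.apply i (σ i)
    rw [Finset.sum_congr rfl fun σ _ => hterm σ]
    rw [← Finset.sum_filter_add_sum_filter_not Finset.univ
      (fun σ : Equiv.Perm (Fin n) => ∀ i, σ i ≠ i)]
    have : ∀ σ ∈ Finset.univ.filter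
        (fun σ : Equiv.Perm (Fin n) => ¬ ∀ i, σ i ≠ i),
        ((Equiv.Perm.sign σ : ℤ) : F) * ∏ i : Fin n, U i (σ i) = 0 := by
      intro σ hσ
      simp only [Finset.mem_filter, not_forall, not_ne_iff] at hσ
      obtain ⟨i, hi⟩ := hσ.2
      rw [Finset.prod_eq_zero (Finset.mem_univ i) (by rw [hi]; exact hdiag i), mul_zero]
    rw [Finset.sum_congr rfl this, Finset.sum_const_zero, add_zero]
  rw [hsum]
  obtain ⟨i0, hn0⟩ : ∃ i : Fin n, i.val = 0 := ⟨⟨0, by omega⟩, rfl⟩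
  obtain ⟨i1, hn1⟩ : ∃ i : Fin n, i.val = 1 := ⟨⟨1, by omega⟩, rfl⟩
  have h01 : i0 < i1 := by rw [Fin.lt_def]; omega
  have hc : U i0 i1 ≠ 0 := hnz _ _ (ne_of_lt h01)
  refine aux hn (fun i => U i0 i) (fun i => if i = i0 then -1 else U i1 i / U i0 i1)
    U hsym hdiag hnz ?_
  intro i j hij
  have hijv := hij
  rw [Fin.lt_def] at hijv
  have hjlt := j.isLt
  simp only [ff]
  have hji0 : j ≠ i0 := fun h => by rw [Fin.ext_iff] at h; omega
  rw [if_neg hji0]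
  by_cases hi0 : i = i0
  · rw [if_pos hi0, hi0, hdiag i0]
    ring
  · have hiv0 : i.val ≠ 0 := fun h => hi0 (Fin.ext (by omega))
    rw [if_neg hi0]
    by_cases hi1 : i = i1
    · rw [hi1, hdiag i1]
      field_simp
      ring
    · have hiv1 : i.val ≠ 1 := fun h => hi1 (Fin.ext (by omega))
      have h1i : i1 < i := by rw [Fin.lt_def]; omega
      have hx := hex i0 i1 i j h01 h1i hij
      rw [hsym.apply i0 j] at hx
      field_simp
      linear_combination hx
end

section
/- Let $n \geq 3$. For a zero-diagonal symmetric matrix $U = (u_{ij})$ over a field with nonzero off-diagonal entries satisfying the cyclic exchange relations, $\det(U) \neq 0$ whenever the characteristic of the field is not 2 and the boundary entries $u_{i,i+1}$ ($i$ mod $n$) are all nonzero. -/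
/-- When the characteristic of the field is not 2 and the boundary entries are nonzero,
the frieze determinant is nonzero. -/
theorem frieze_det_ne_zero {F : Type*} [Field F] (n : ℕ) (hn : 3 ≤ n)
    (hchar : ringChar F ≠ 2)
    (U : Matrix (Fin n) (Fin n) F)
    (hsym : U.IsSymm)
    (hdiag : ∀ i, U i i = 0)
    (hnz : ∀ i j : Fin n, i ≠ j → U i j ≠ 0)
    (hbdry : ∀ i : Fin n, U i (finRotate n i) ≠ 0)
    (hex : ∀ i j k l : Fin n, i < j → j < k → k < l →
      U i j * U k l + U j k * U l i = U i k * U j l) :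
    U.det ≠ 0 := by
  intro hdet
  obtain ⟨v, hv, hUv⟩ := Matrix.exists_mulVec_eq_zero_iff.mpr hdet
  have h2 : (2 : F) ≠ 0 := Ring.two_ne_zero hchar
  have hsymm : ∀ a b : Fin n, U a b = U b a := fun a b => by
    have := congrFun (congrFun hsym b) a
    rwa [Matrix.transpose_apply] at this
  have hS : ∀ i : Fin n, ∑ j, U i j * v j = 0 := fun i => by
    have := congrFun hUv i
    simpa [Matrix.mulVec, dotProduct] using this
  -- middle entries of v vanish
  have hmid : ∀ k : Fin n, 0 < (k : ℕ) → (k : ℕ) < n - 1 → v k = 0 := by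
    intro k hk0 hk1
    have hkn : (k : ℕ) < n := k.isLt
    set k' : Fin n := ⟨(k : ℕ) - 1, by omega⟩ with hk'
    set k'' : Fin n := ⟨(k : ℕ) + 1, by omega⟩ with hk''
    have hvk' : (k' : ℕ) = (k : ℕ) - 1 := rfl
    have hvk'' : (k'' : ℕ) = (k : ℕ) + 1 := rfl
    have hlt1 : k' < k := by rw [Fin.lt_def]; omega
    have hlt2 : k < k'' := by rw [Fin.lt_def]; omega
    have key : ∀ j : Fin n,
        U k k'' * U k' j + (-U k' k'') * U k j + U k' k * U k'' j
          = if j = k then 2 * (U k' k * U k k'') else 0 := by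
      intro j
      have htri : (j : ℕ) < (k : ℕ) - 1 ∨ (j : ℕ) = (k : ℕ) - 1 ∨ (j : ℕ) = (k : ℕ)
          ∨ (j : ℕ) = (k : ℕ) + 1 ∨ (k : ℕ) + 1 < (j : ℕ) := by omega
      rcases htri with hj | hj | hj | hj | hj
      · have hne : j ≠ k := by intro h; rw [h] at hj; omega
        rw [if_neg hne]
        have he := hex j k' k k'' (by rw [Fin.lt_def]; omega) hlt1 hlt2
        linear_combination he + U k k'' * hsymm k' j - U k' k'' * hsymm k j
      · have hje : j = k' := Fin.ext (by rw [hvk']; exact hj)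
        have hne : j ≠ k := by intro h; rw [h] at hj; omega
        rw [if_neg hne, hje, hdiag, hsymm k k', hsymm k'' k']
        ring
      · have hje : j = k := Fin.ext hj
        rw [hje, if_pos rfl, hdiag, hsymm k'' k]
        ring
      · have hje : j = k'' := Fin.ext (by rw [hvk'']; exact hj)
        have hne : j ≠ k := by intro h; rw [h] at hj; omega
        rw [if_neg hne, hje, hdiag]
        ring
      · have hne : j ≠ k := by intro h; rw [h] at hj; omega
        rw [if_neg hne]
        have he := hex k' k k'' j hlt1 hlt2 (by rw [Fin.lt_def]; omega)
        linear_combination he + U k k'' * hsymm k' j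
    have hz : ∑ j, (U k k'' * U k' j + (-U k' k'') * U k j + U k' k * U k'' j) * v j
        = 0 := by
      have h1 := hS k'
      have h2' := hS k
      have h3 := hS k''
      have hre : ∀ j : Fin n,
          (U k k'' * U k' j + (-U k' k'') * U k j + U k' k * U k'' j) * v j
            = U k k'' * (U k' j * v j) + (-U k' k'') * (U k j * v j)
              + U k' k * (U k'' j * v j) := fun j => by ring
      rw [Finset.sum_congr rfl (fun j _ => hre j), Finset.sum_add_distrib,
        Finset.sum_add_distrib, ← Finset.mul_sum, ← Finset.mul_sum, ← Finset.mul_sum,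
        h1, h2', h3]
      ring
    have hsum : ∑ j, (U k k'' * U k' j + (-U k' k'') * U k j + U k' k * U k'' j) * v j
        = 2 * (U k' k * U k k'') * v k := by
      rw [Finset.sum_congr rfl (fun j _ => by rw [key j])]
      simp [ite_mul]
    rw [hz] at hsum
    have hne1 : U k' k ≠ 0 := hnz k' k (by intro h; rw [h] at hlt1; exact lt_irrefl _ hlt1)
    have hne2 : U k k'' ≠ 0 := hnz k k'' (by intro h; rw [h] at hlt2; exact lt_irrefl _ hlt2)
    have hprod : 2 * (U k' k * U k k'') ≠ 0 := mul_ne_zero h2 (mul_ne_zero hne1 hne2)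
    exact (mul_eq_zero.mp hsum.symm).resolve_left hprod
  -- now the endpoints
  set z : Fin n := ⟨0, by omega⟩ with hz0
  set m : Fin n := ⟨n - 1, by omega⟩ with hm0
  have hzm : z ≠ m := by intro h; have := congrArg Fin.val h; simp [hz0, hm0] at this; omega
  have hvm : v m = 0 := by
    have h0 := hS z
    rw [Finset.sum_eq_single m (fun j _ hjm => by
      by_cases hjz : j = z
      · subst hjz; rw [hdiag]; ring
      · have : 0 < (j : ℕ) := by
          rcases Nat.eq_zero_or_pos (j : ℕ) with h | h
          · exact absurd (Fin.ext h : j = z) hjz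
          · exact h
        have : v j = 0 := hmid j this (by
          rcases Nat.lt_or_ge (j : ℕ) (n - 1) with h | h
          · exact h
          · have : (j : ℕ) = n - 1 := by have := j.isLt; omega
            exact absurd (Fin.ext this : j = m) hjm)
        rw [this]; ring) (fun h => absurd (Finset.mem_univ m) h)] at h0
    exact (mul_eq_zero.mp h0).resolve_left (hnz z m hzm)
  have hvz : v z = 0 := by
    have h0 := hS m
    rw [Finset.sum_eq_single z (fun j _ hjz => by
      by_cases hjm : j = m
      · subst hjm; rw [hdiag]; ring
      · have h1 : 0 < (j : ℕ) := by
          rcases Nat.eq_zero_or_pos (j : ℕ) with h | h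
          · exact absurd (Fin.ext h : j = z) hjz
          · exact h
        have h2' : (j : ℕ) < n - 1 := by
          rcases Nat.lt_or_ge (j : ℕ) (n - 1) with h | h
          · exact h
          · have : (j : ℕ) = n - 1 := by have := j.isLt; omega
            exact absurd (Fin.ext this : j = m) hjm
        rw [hmid j h1 h2']; ring) (fun h => absurd (Finset.mem_univ z) h)] at h0
    exact (mul_eq_zero.mp h0).resolve_left (hnz m z hzm.symm)
  apply hv
  funext j
  by_cases hjz : j = z
  · subst hjz; exact hvz
  by_cases hjm : j = m
  · subst hjm; exact hvm
  have h1 : 0 < (j : ℕ) := by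
    rcases Nat.eq_zero_or_pos (j : ℕ) with h | h
    · exact absurd (Fin.ext h : j = z) hjz
    · exact h
  have h2' : (j : ℕ) < n - 1 := by
    rcases Nat.lt_or_ge (j : ℕ) (n - 1) with h | h
    · exact h
    · have : (j : ℕ) = n - 1 := by have := j.isLt; omega
      exact absurd (Fin.ext this : j = m) hjm
  exact hmid j h1 h2'
end
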